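/- arXiv:1907.01401 — 3 statements merged into one kernel-verified Lean document; each statement's English description precedes it below -/
import Mathlib

section
/- Define a graph on V = 𝔽₂^D (D even) by joining x, x' whenever there exists i ∈ [1,D] with x + x' = e_i and (x, e_i) = (x', e_i) = 0. If x, x' lie in the same connected component of this graph, then u(x) = u(x'). -/
/-- The bilinear form on `𝔽₂^D` determined by `(e_i, e_j) = 1` iff `|i - j| = 1`. -/
def bform (D : ℕ) (x y : Fin D → ZMod 2) : ZMod 2 :=
  ∑ a : Fin D, ∑ b : Fin D,
    if a.1 = b.1 + 1 ∨ b.1 = a.1 + 1 then x a * y b else 0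

/-- The basis vector `e_i` of `𝔽₂^n` (1-based index `i`). -/
def basisVec (n i : ℕ) : Fin n → ZMod 2 := fun k => if k.1 + 1 = i then 1 else 0

/-- Adjacency in the graph on `V`: `x ∼ x'` iff `x + x' = e_i` and
`(x, e_i) = (x', e_i) = 0` for some `i ∈ [1,D]`. -/
def Adj (D : ℕ) (x x' : Fin D → ZMod 2) : Prop :=
  ∃ i : ℕ, 1 ≤ i ∧ i ≤ D ∧ x + x' = basisVec D i ∧
    bform D x (basisVec D i) = 0 ∧ bform D x' (basisVec D i) = 0

/-- The vector `e_I = ∑_{i ∈ I} e_i` of an interval `I = (a,b)` (1-based). -/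
def eI (D : ℕ) (p : ℕ × ℕ) : Fin D → ZMod 2 :=
  fun k => if p.1 ≤ k.1 + 1 ∧ k.1 + 1 ≤ p.2 then 1 else 0

/-- Normal-form decomposition into pairwise non-touching increasing intervals. -/
def NormalDecomp (D : ℕ) (L : List (ℕ × ℕ)) : Prop :=
  (∀ p ∈ L, 1 ≤ p.1 ∧ p.1 ≤ p.2 ∧ p.2 ≤ D) ∧ L.Chain' (fun p q => p.2 + 2 ≤ q.1)

/-- `u` of a decomposition. -/
def uval (L : List (ℕ × ℕ)) : ℤ :=
  (L.countP (fun p => decide (p.1 % 2 = 0 ∧ p.2 % 2 = 1)) : ℤ) -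
    (L.countP (fun p => decide (p.1 % 2 = 1 ∧ p.2 % 2 = 0)) : ℤ)

def extv (D : ℕ) (x : Fin D → ZMod 2) (k : ℕ) : ZMod 2 :=
  if h : 1 ≤ k ∧ k ≤ D then x ⟨k-1, by omega⟩ else 0

def Tt (D : ℕ) (x : Fin D → ZMod 2) (k : ℕ) : ℤ :=
  (if extv D x k = 1 ∧ extv D x (k+1) = 0 ∧ k % 2 = 1 then 1 else 0)
  - (if extv D x k = 0 ∧ extv D x (k+1) = 1 ∧ k % 2 = 0 then 1 else 0)

def Uv (D : ℕ) (x : Fin D → ZMod 2) : ℤ := ∑ k ∈ Finset.range (D+1), Tt D x k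

lemma extv_add (D : ℕ) (x y : Fin D → ZMod 2) (k : ℕ) :
    extv D (x + y) k = extv D x k + extv D y k := by
  unfold extv; split_ifs <;> simp

lemma extv_basis (D i : ℕ) (h1 : 1 ≤ i) (h2 : i ≤ D) (k : ℕ) :
    extv D (basisVec D i) k = if k = i then 1 else 0 := by
  unfold extv basisVec
  split_ifs with h h3 h3 <;> first | rfl | (exfalso; (try simp only [Fin.val_mk] at *); omega)

lemma extv_eI (D : ℕ) (p : ℕ × ℕ) (h1 : 1 ≤ p.1) (h2 : p.2 ≤ D) (k : ℕ) :
    extv D (eI D p) k = if p.1 ≤ k ∧ k ≤ p.2 then 1 else 0 := by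
  unfold extv eI
  split_ifs with h h3 h3 <;> first | rfl | (exfalso; (try simp only [Fin.val_mk] at *); omega)

lemma sum_ite_eq_extv (D : ℕ) (x : Fin D → ZMod 2) (j : ℕ) :
    (∑ a : Fin D, if a.1 = j then x a else 0) = extv D x (j+1) := by
  by_cases hj : j < D
  · rw [Finset.sum_eq_single (⟨j, hj⟩ : Fin D)]
    · rw [if_pos rfl]
      unfold extv
      rw [dif_pos ⟨by omega, by omega⟩]
      rfl
    · intro b _ hb
      rw [if_neg]
      intro hc
      exact hb (Fin.ext hc)
    · intro h; exact absurd (Finset.mem_univ _) h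
  · rw [Finset.sum_eq_zero]
    · unfold extv; rw [dif_neg]; omega
    · intro a _; rw [if_neg]; omega

lemma bform_basis (D : ℕ) (x : Fin D → ZMod 2) (i : ℕ) (h1 : 1 ≤ i) (h2 : i ≤ D) :
    bform D x (basisVec D i) = extv D x (i-1) + extv D x (i+1) := by
  unfold bform
  have key : ∀ a : Fin D, (∑ b : Fin D, if a.1 = b.1 + 1 ∨ b.1 = a.1 + 1 then x a * basisVec D i b else 0)
      = (if a.1 + 2 = i then x a else 0) + (if a.1 = i then x a else 0) := by
    intro a
    rw [Finset.sum_eq_single (⟨i-1, by omega⟩ : Fin D)]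
    · unfold basisVec
      simp only [Fin.val_mk]
      rw [if_pos (by omega : (i-1) + 1 = i), mul_one]
      split_ifs <;> first | omega | ring
    · intro b _ hb
      have hbv : b.1 ≠ i - 1 := fun hc => hb (Fin.ext hc)
      unfold basisVec
      rw [if_neg (by omega : ¬ (b.1 + 1 = i)), mul_zero]
      split_ifs <;> rfl
    · intro h; exact absurd (Finset.mem_univ _) h
  rw [Finset.sum_congr rfl (fun a _ => key a), Finset.sum_add_distrib, sum_ite_eq_extv]
  congr 1
  rcases Nat.lt_or_ge i 2 with hi | hi
  · have hi1 : i = 1 := by omega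
    subst hi1
    rw [Finset.sum_eq_zero]
    · unfold extv; rw [dif_neg]; omega
    · intro a _; rw [if_neg]; omega
  · have : (∑ a : Fin D, if a.1 + 2 = i then x a else 0)
        = ∑ a : Fin D, if a.1 = (i-2) then x a else 0 := by
      apply Finset.sum_congr rfl
      intro a _
      apply if_congr (by omega) rfl rfl
    rw [this, sum_ite_eq_extv]
    congr 1
    omega

lemma zmod2_cases : ∀ a : ZMod 2, a = 0 ∨ a = 1 := by decide

lemma Uv_adj (D : ℕ) (x x' : Fin D → ZMod 2) (h : Adj D x x') : Uv D x = Uv D x' := by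
  obtain ⟨i, h1, h2, hsum, hb, _⟩ := h
  have hx' : ∀ k, extv D x' k = extv D x k + (if k = i then 1 else 0) := by
    intro k
    have h3 : extv D x k + extv D x' k = extv D (basisVec D i) k := by
      rw [← extv_add, hsum]
    rw [extv_basis D i h1 h2] at h3
    have key : ∀ a b c : ZMod 2, a + b = c → b = a + c := by decide
    exact key _ _ _ h3
  have hcond : extv D x (i-1) = extv D x (i+1) := by
    rw [bform_basis D x i h1 h2] at hb
    have key : ∀ a b : ZMod 2, a + b = 0 → a = b := by decide
    exact key _ _ hb
  have hsame : ∀ k, k ≠ i-1 → k ≠ i → Tt D x k = Tt D x' k := by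
    intro k hk1 hk2
    unfold Tt
    rw [hx' k, hx' (k+1), if_neg hk2, if_neg (by omega : ¬ k + 1 = i), add_zero, add_zero]
  have hzero : Uv D x - Uv D x' = 0 := by
    unfold Uv
    rw [← Finset.sum_sub_distrib]
    rw [show (∑ k ∈ Finset.range (D+1), (Tt D x k - Tt D x' k))
        = ∑ k ∈ ({i-1, i} : Finset ℕ), (Tt D x k - Tt D x' k) from by
      symm
      apply Finset.sum_subset
      · intro k hk
        simp only [Finset.mem_insert, Finset.mem_singleton] at hk
        simp only [Finset.mem_range]
        omega
      · intro k _ hk2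
        simp only [Finset.mem_insert, Finset.mem_singleton, not_or] at hk2
        rw [hsame k hk2.1 hk2.2, sub_self]]
    rw [Finset.sum_pair (by omega : i - 1 ≠ i)]
    have e1 : extv D x' (i-1) = extv D x (i-1) := by
      rw [hx', if_neg (by omega), add_zero]
    have e2 : extv D x' i = extv D x i + 1 := by rw [hx', if_pos rfl]
    have e3 : extv D x (i-1+1) = extv D x i := by rw [show i - 1 + 1 = i from by omega]
    have e4 : extv D x' (i-1+1) = extv D x i + 1 := by
      rw [show i - 1 + 1 = i from by omega, e2]
    have e5 : extv D x' (i+1) = extv D x (i-1) := by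
      rw [hx', if_neg (by omega), add_zero, ← hcond]
    unfold Tt
    rw [e1, e2, e3, e4, e5, ← hcond]
    rcases zmod2_cases (extv D x (i-1)) with ha | ha <;>
      rcases zmod2_cases (extv D x i) with hc | hc <;>
      rw [ha, hc] <;>
      rcases Nat.mod_two_eq_zero_or_one i with hp | hp <;>
      [skip; skip; skip; skip; skip; skip; skip; skip] <;>
      first
      | (have hp2 : (i-1) % 2 = 1 := by omega
         simp [hp, hp2])
      | (have hp2 : (i-1) % 2 = 0 := by omega
         simp [hp, hp2])
  omega

lemma Tt_add_sep (D c : ℕ) (e s : Fin D → ZMod 2)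
    (he : ∀ k, c+1 ≤ k → extv D e k = 0) (hs : ∀ k, k ≤ c+1 → extv D s k = 0) (k : ℕ) :
    Tt D (e + s) k = Tt D e k + Tt D s k := by
  by_cases hk : k ≤ c
  · have h1 := hs k (by omega)
    have h2 := hs (k+1) (by omega)
    unfold Tt
    rw [extv_add, extv_add, h1, h2, add_zero, add_zero]
    simp [h1, h2]
  · have h1 := he k (by omega)
    have h2 := he (k+1) (by omega)
    unfold Tt
    rw [extv_add, extv_add, h1, h2, zero_add, zero_add]
    simp [h1, h2]

lemma Uv_add_sep (D c : ℕ) (e s : Fin D → ZMod 2)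
    (he : ∀ k, c+1 ≤ k → extv D e k = 0) (hs : ∀ k, k ≤ c+1 → extv D s k = 0) :
    Uv D (e + s) = Uv D e + Uv D s := by
  unfold Uv
  rw [← Finset.sum_add_distrib]
  exact Finset.sum_congr rfl fun k _ => Tt_add_sep D c e s he hs k

lemma Uv_eI (D : ℕ) (p : ℕ × ℕ) (h1 : 1 ≤ p.1) (h12 : p.1 ≤ p.2) (h2 : p.2 ≤ D) :
    Uv D (eI D p) = (p.2 % 2 : ℤ) - (p.1 % 2 : ℤ) := by
  unfold Uv
  have hsub : ({p.1 - 1, p.2} : Finset ℕ) ⊆ Finset.range (D+1) := by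
    intro k hk
    simp only [Finset.mem_insert, Finset.mem_singleton] at hk
    simp only [Finset.mem_range]
    omega
  rw [← Finset.sum_subset hsub ?_]
  · rw [Finset.sum_pair (by omega : p.1 - 1 ≠ p.2)]
    unfold Tt
    simp only [extv_eI D p h1 h2]
    rw [if_neg (by omega : ¬(p.1 ≤ p.1 - 1 ∧ p.1 - 1 ≤ p.2)),
        if_pos (by omega : p.1 ≤ p.1 - 1 + 1 ∧ p.1 - 1 + 1 ≤ p.2),
        if_pos (by omega : p.1 ≤ p.2 ∧ p.2 ≤ p.2),
        if_neg (by omega : ¬(p.1 ≤ p.2 + 1 ∧ p.2 + 1 ≤ p.2))]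
    rcases Nat.mod_two_eq_zero_or_one p.1 with hp1 | hp1 <;>
      rcases Nat.mod_two_eq_zero_or_one p.2 with hp2 | hp2 <;>
      (first
        | (have hq : (p.1 - 1) % 2 = 1 := by omega
           simp [hp1, hp2, hq])
        | (have hq : (p.1 - 1) % 2 = 0 := by omega
           simp [hp1, hp2, hq])) <;>
      omega
  · intro k hk hk2
    simp only [Finset.mem_insert, Finset.mem_singleton, not_or] at hk2
    unfold Tt
    simp only [extv_eI D p h1 h2]
    by_cases hc1 : p.1 ≤ k ∧ k ≤ p.2
    · rw [if_pos hc1, if_pos (by omega : p.1 ≤ k + 1 ∧ k + 1 ≤ p.2)]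
      norm_num
    · rw [if_neg hc1, if_neg (by omega : ¬(p.1 ≤ k + 1 ∧ k + 1 ≤ p.2))]
      norm_num

lemma extv_sum_zero (D : ℕ) (L : List (ℕ × ℕ)) (m : ℕ)
    (h : ∀ q ∈ L, m ≤ q.1) (hv : ∀ q ∈ L, 1 ≤ q.1 ∧ q.2 ≤ D) (k : ℕ) (hk : k < m) :
    extv D (L.map (eI D)).sum k = 0 := by
  induction L with
  | nil =>
    simp only [List.map_nil, List.sum_nil]
    unfold extv
    split_ifs <;> rfl
  | cons q L ih =>
    rw [List.map_cons, List.sum_cons, extv_add]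
    rw [extv_eI D q (hv q (by simp)).1 (hv q (by simp)).2,
        if_neg (by have := h q (by simp); omega), zero_add]
    exact ih (fun r hr => h r (by simp [hr])) (fun r hr => hv r (by simp [hr]))

lemma chain_lb : ∀ (L : List (ℕ × ℕ)) (p : ℕ × ℕ), (∀ q ∈ L, q.1 ≤ q.2) →
    List.Chain' (fun p q => p.2 + 2 ≤ q.1) (p :: L) → ∀ q ∈ L, p.2 + 2 ≤ q.1 := by
  intro L
  induction L with
  | nil => intro p _ _ q hq; simp at hq
  | cons q L ih =>
    intro p hv hc r hr
    rw [List.Chain', List.isChain_cons_cons] at hc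
    rcases List.mem_cons.mp hr with rfl | hr
    · exact hc.1
    · have h1 := ih q (fun s hs => hv s (List.mem_cons_of_mem _ hs)) hc.2 r hr
      have hq := hv q List.mem_cons_self
      omega

lemma Uv_decomp (D : ℕ) : ∀ (L : List (ℕ × ℕ)), NormalDecomp D L →
    Uv D (L.map (eI D)).sum = uval L := by
  intro L
  induction L with
  | nil =>
    intro _
    have h0 : ∀ k, extv D ((List.map (eI D) []).sum) k = 0 := by
      intro k
      simp only [List.map_nil, List.sum_nil]
      unfold extv
      split_ifs <;> rfl
    unfold Uv uval
    simp only [List.countP_nil]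
    rw [Finset.sum_eq_zero]
    · norm_num
    · intro k _
      unfold Tt
      rw [h0, h0]
      norm_num
  | cons p L ih =>
    rintro ⟨hv, hc⟩
    have hp := hv p (by simp)
    have hrest : NormalDecomp D L := ⟨fun q hq => hv q (by simp [hq]), hc.tail⟩
    have hlb : ∀ q ∈ L, p.2 + 2 ≤ q.1 :=
      chain_lb L p (fun q hq => (hv q (by simp [hq])).2.1) hc
    rw [List.map_cons, List.sum_cons]
    rw [Uv_add_sep D p.2 _ _
        (fun k hk => by rw [extv_eI D p hp.1 hp.2.2, if_neg (by omega)])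
        (fun k hk => extv_sum_zero D L (p.2+2) hlb
          (fun q hq => ⟨(hv q (by simp [hq])).1, (hv q (by simp [hq])).2.2⟩) k (by omega))]
    rw [Uv_eI D p hp.1 hp.2.1 hp.2.2, ih hrest]
    unfold uval
    rw [List.countP_cons, List.countP_cons]
    rcases Nat.mod_two_eq_zero_or_one p.1 with h1 | h1 <;>
      rcases Nat.mod_two_eq_zero_or_one p.2 with h2 | h2 <;>
      simp [h1, h2] <;> omega

lemma Uv_rtg (D : ℕ) (x x' : Fin D → ZMod 2)
    (h : Relation.ReflTransGen (Adj D) x x') : Uv D x = Uv D x' := by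
  induction h with
  | refl => rfl
  | tail _ hadj ih => rw [ih, Uv_adj _ _ _ hadj]

/-- If `x, x'` lie in the same connected component of the graph on `V` (`D` even),
then `u(x) = u(x')`. -/
theorem stmt_11 (D : ℕ) (hD : Even D) (x x' : Fin D → ZMod 2)
    (h : Relation.ReflTransGen (Adj D) x x')
    (L L' : List (ℕ × ℕ)) (hL : NormalDecomp D L) (hLsum : (L.map (eI D)).sum = x)
    (hL' : NormalDecomp D L') (hL'sum : (L'.map (eI D)).sum = x') :
    uval L = uval L' := by
  have h1 : uval L = Uv D x := by rw [← hLsum]; exact (Uv_decomp D L hL).symm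
  have h2 : uval L' = Uv D x' := by rw [← hL'sum]; exact (Uv_decomp D L' hL').symm
  rw [h1, h2]
  exact Uv_rtg D x x' h
end

section
/- With D even and the graph on V = 𝔽₂^D as above (x ∼ x' iff x + x' = e_i and (x,e_i)=0 for some i), two vectors x, x' lie in the same connected component if and only if u(x) = u(x'). Consequently the connected components of the graph are exactly the fibers of u. -/
namespace S12

abbrev rel : ℕ × ℕ → ℕ × ℕ → Prop := fun p q => p.2 + 2 ≤ q.1

def vec (D : ℕ) (L : List (ℕ × ℕ)) : Fin D → ZMod 2 := (L.map (eI D)).sum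

def pos (D : ℕ) (x : Fin D → ZMod 2) (j : ℕ) : ZMod 2 :=
  if h : 1 ≤ j ∧ j ≤ D then x ⟨j - 1, by omega⟩ else 0

def Cov (L : List (ℕ × ℕ)) (j : ℕ) : Prop := ∃ p ∈ L, p.1 ≤ j ∧ j ≤ p.2

instance (L : List (ℕ × ℕ)) (j : ℕ) : Decidable (Cov L j) :=
  List.decidableBEx _ L

lemma zadd : ∀ a : ZMod 2, a + a = 0 := by decide
lemma z01 : ∀ a : ZMod 2, a = 0 ∨ a = 1 := by decide

lemma vec_nil (D : ℕ) : vec D [] = 0 := rfl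

lemma vec_cons (D : ℕ) (p : ℕ × ℕ) (L : List (ℕ × ℕ)) :
    vec D (p :: L) = eI D p + vec D L := by
  simp [vec]

lemma vec_append (D : ℕ) (L M : List (ℕ × ℕ)) :
    vec D (L ++ M) = vec D L + vec D M := by
  simp [vec]

lemma vadd_self (D : ℕ) (v : Fin D → ZMod 2) : v + v = 0 := by
  funext k; exact zadd _

/-- `Chain'` plus increasingness gives `Pairwise`. -/
lemma pw_of_chain : ∀ (L : List (ℕ × ℕ)), (∀ p ∈ L, p.1 ≤ p.2) →
    L.Chain' rel → L.Pairwise rel := by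
  intro L
  induction L with
  | nil => intro _ _; simp
  | cons p T ih =>
    intro hb hc
    rcases List.isChain_cons.1 hc with ⟨hhd, hT⟩
    have hpw : T.Pairwise rel := ih (fun q hq => hb q (List.mem_cons_of_mem _ hq)) hT
    refine List.pairwise_cons.2 ⟨?_, hpw⟩
    intro q hq
    match T, hq with
    | t :: T', hq =>
      have h1 : rel p t := hhd t rfl
      rcases List.mem_cons.1 hq with h | h
      · exact h ▸ h1
      · have h2 : rel t q := (List.rel_of_pairwise_cons hpw) h
        have h3 : t.1 ≤ t.2 := hb t (by simp)
        simp only [rel] at *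
        omega

lemma nd_iff (D : ℕ) (L : List (ℕ × ℕ)) :
    NormalDecomp D L ↔ ((∀ p ∈ L, 1 ≤ p.1 ∧ p.1 ≤ p.2 ∧ p.2 ≤ D) ∧ L.Pairwise rel) := by
  constructor
  · rintro ⟨hb, hc⟩
    exact ⟨hb, pw_of_chain L (fun p hp => (hb p hp).2.1) hc⟩
  · rintro ⟨hb, hp⟩
    exact ⟨hb, hp.isChain⟩

lemma vec_apply (D : ℕ) (L : List (ℕ × ℕ)) (hpw : L.Pairwise rel) (k : Fin D) :
    vec D L k = if Cov L (k.1 + 1) then 1 else 0 := by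
  induction L with
  | nil => simp [vec_nil, Cov]
  | cons p T ih =>
    have hpwT : T.Pairwise rel := (List.pairwise_cons.1 hpw).2
    have hrel : ∀ q ∈ T, rel p q := (List.pairwise_cons.1 hpw).1
    rw [vec_cons]
    by_cases hp : p.1 ≤ k.1 + 1 ∧ k.1 + 1 ≤ p.2
    · have hnT : ¬ Cov T (k.1 + 1) := by
        rintro ⟨q, hq, h1, h2⟩
        have := hrel q hq
        simp only [rel] at this; omega
      have hCov : Cov (p :: T) (k.1 + 1) := ⟨p, by simp, hp⟩
      simp [hCov, Pi.add_apply, eI, hp, ih hpwT, hnT]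
    · have : Cov (p :: T) (k.1 + 1) ↔ Cov T (k.1 + 1) := by
        constructor
        · rintro ⟨q, hq, hq2⟩
          rcases List.mem_cons.1 hq with h | h
          · exact absurd (h ▸ hq2) hp
          · exact ⟨q, h, hq2⟩
        · rintro ⟨q, hq, hq2⟩; exact ⟨q, List.mem_cons_of_mem _ hq, hq2⟩
      simp [Pi.add_apply, eI, hp, ih hpwT, this]
      intro _; omega

lemma pos_vec (D : ℕ) (L : List (ℕ × ℕ)) (hnd : NormalDecomp D L) (j : ℕ) :
    pos D (vec D L) j = if Cov L j then 1 else 0 := by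
  rcases (nd_iff D L).1 hnd with ⟨hb, hpw⟩
  unfold pos
  split_ifs with h1 h2 h3
  · rw [vec_apply D L hpw ⟨j - 1, by omega⟩]
    have : j - 1 + 1 = j := by omega
    rw [this]; simp [h2]
  · rw [vec_apply D L hpw ⟨j - 1, by omega⟩]
    have : j - 1 + 1 = j := by omega
    rw [this]; simp [h2]
  · rcases h3 with ⟨p, hp, hp2⟩
    have := hb p hp; omega
  · rfl

lemma pos_add (D : ℕ) (x y : Fin D → ZMod 2) (j : ℕ) :
    pos D (x + y) j = pos D x j + pos D y j := by
  unfold pos; split_ifs <;> simp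

lemma pos_basis (D i : ℕ) (h1 : 1 ≤ i) (h2 : i ≤ D) :
    pos D (basisVec D i) i = 1 := by
  unfold pos basisVec
  rw [dif_pos ⟨h1, h2⟩]
  simp only []
  rw [if_pos (by omega)]

end S12

namespace S12

lemma sum_indicator (D : ℕ) (x : Fin D → ZMod 2) (m : ℕ) :
    (∑ a : Fin D, if (a : ℕ) + 1 = m then x a else 0) = pos D x m := by
  by_cases h : 1 ≤ m ∧ m ≤ D
  · rw [Finset.sum_eq_single (⟨m - 1, by omega⟩ : Fin D)]
    · rw [if_pos (show m - 1 + 1 = m by omega)]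
      unfold pos; rw [dif_pos h]
    · intro b _ hb
      rw [if_neg]
      intro hc
      exact hb (Fin.ext (show b.1 = m - 1 by omega))
    · simp
  · rw [Finset.sum_eq_zero, pos, dif_neg h]
    intro a _
    have := a.isLt
    rw [if_neg]; omega
  
lemma bform_basis (D : ℕ) (x : Fin D → ZMod 2) (i : ℕ) (h1 : 1 ≤ i) (h2 : i ≤ D) :
    bform D x (basisVec D i) = pos D x (i - 1) + pos D x (i + 1) := by
  unfold bform
  have key : ∀ a : Fin D,
      (∑ b : Fin D, if a.1 = b.1 + 1 ∨ b.1 = a.1 + 1 then x a * basisVec D i b else 0)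
        = (if (a : ℕ) + 1 = i - 1 then x a else 0) + (if (a : ℕ) + 1 = i + 1 then x a else 0) := by
    intro a
    have hb0 : basisVec D i ⟨i - 1, by omega⟩ = 1 := by
      show (if i - 1 + 1 = i then (1 : ZMod 2) else 0) = 1
      rw [if_pos (by omega)]
    have step : (∑ b : Fin D, if a.1 = b.1 + 1 ∨ b.1 = a.1 + 1 then x a * basisVec D i b else 0)
        = (if a.1 = (i-1) + 1 ∨ (i-1) = a.1 + 1 then x a * basisVec D i ⟨i-1, by omega⟩ else 0) := by
      rw [Finset.sum_eq_single (⟨i - 1, by omega⟩ : Fin D)]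
      · intro b _ hb
        have hbv : basisVec D i b = 0 := by
          unfold basisVec
          rw [if_neg]
          intro hc
          exact hb (Fin.ext (show b.1 = i - 1 by omega))
        rw [hbv, mul_zero, ite_self]
      · simp
    rw [step, hb0, mul_one]
    have := a.isLt
    split_ifs <;> first | rfl | omega | (symm; rw [self_eq_add_left]) | rw [self_eq_add_right] | simp
  rw [Finset.sum_congr rfl (fun a _ => key a), Finset.sum_add_distrib,
    sum_indicator, sum_indicator]

end S12

namespace S12

/-- vector identity: singleton interval is a basis vector -/
lemma eI_singleton (D a : ℕ) : eI D (a, a) = basisVec D a := by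
  funext k
  simp only [eI, basisVec]
  congr 1
  simp only [eq_iff_iff]
  omega

/-- vector identity: splitting an interval -/
lemma eI_split (D a b i : ℕ) (h1 : 1 ≤ a) (h2 : a < i) (h3 : i < b) :
    eI D (a, b) = eI D (a, i - 1) + eI D (i + 1, b) + basisVec D i := by
  funext k
  simp only [eI, basisVec, Pi.add_apply]
  split_ifs <;> first | rfl | omega | decide

/-- bounds and pairwise decomposition of a three-part normal decomposition -/
lemma nd_parts (D : ℕ) (P M Q : List (ℕ × ℕ)) (h : NormalDecomp D (P ++ M ++ Q)) :
    (∀ p ∈ P, 1 ≤ p.1 ∧ p.1 ≤ p.2 ∧ p.2 ≤ D) ∧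
    (∀ p ∈ M, 1 ≤ p.1 ∧ p.1 ≤ p.2 ∧ p.2 ≤ D) ∧
    (∀ p ∈ Q, 1 ≤ p.1 ∧ p.1 ≤ p.2 ∧ p.2 ≤ D) ∧
    P.Pairwise rel ∧ M.Pairwise rel ∧ Q.Pairwise rel ∧
    (∀ p ∈ P, ∀ m ∈ M, rel p m) ∧ (∀ p ∈ P, ∀ q ∈ Q, rel p q) ∧
    (∀ m ∈ M, ∀ q ∈ Q, rel m q) := by
  rw [nd_iff] at h
  rcases h with ⟨hb, hpw⟩
  rw [List.pairwise_append, List.pairwise_append] at hpw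
  refine ⟨?_, ?_, ?_, hpw.1.1, hpw.1.2.1, hpw.2.1, hpw.1.2.2, ?_, ?_⟩ <;>
    try (intro p hp; exact hb p (by simp [hp]))
  · intro p hp q hq; exact hpw.2.2 p (by simp [hp]) q hq
  · intro m hm q hq; exact hpw.2.2 m (by simp [hm]) q hq

lemma nd_glue (D : ℕ) (P M Q : List (ℕ × ℕ))
    (h1 : ∀ p ∈ P, 1 ≤ p.1 ∧ p.1 ≤ p.2 ∧ p.2 ≤ D)
    (h2 : ∀ p ∈ M, 1 ≤ p.1 ∧ p.1 ≤ p.2 ∧ p.2 ≤ D)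
    (h3 : ∀ p ∈ Q, 1 ≤ p.1 ∧ p.1 ≤ p.2 ∧ p.2 ≤ D)
    (h4 : P.Pairwise rel) (h5 : M.Pairwise rel) (h6 : Q.Pairwise rel)
    (h7 : ∀ p ∈ P, ∀ m ∈ M, rel p m) (h8 : ∀ p ∈ P, ∀ q ∈ Q, rel p q)
    (h9 : ∀ m ∈ M, ∀ q ∈ Q, rel m q) :
    NormalDecomp D (P ++ M ++ Q) := by
  rw [nd_iff]
  constructor
  · intro p hp
    rcases List.mem_append.1 hp with hp' | hq
    · rcases List.mem_append.1 hp' with h | h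
      · exact h1 p h
      · exact h2 p h
    · exact h3 p hq
  · rw [List.pairwise_append, List.pairwise_append]
    refine ⟨⟨h4, h5, h7⟩, h6, ?_⟩
    intro p hp q hq
    rcases List.mem_append.1 hp with h | h
    · exact h8 p h q hq
    · exact h9 p h q hq

/-- replace the middle part of a normal decomposition -/
lemma nd_rep (D : ℕ) {P M Q M' : List (ℕ × ℕ)} (h : NormalDecomp D (P ++ M ++ Q))
    (hb : ∀ p ∈ M', 1 ≤ p.1 ∧ p.1 ≤ p.2 ∧ p.2 ≤ D)
    (hpw : M'.Pairwise rel)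
    (hl : ∀ m' ∈ M', ∃ m ∈ M, m.1 ≤ m'.1)
    (hr : ∀ m' ∈ M', ∃ m ∈ M, m'.2 ≤ m.2) :
    NormalDecomp D (P ++ M' ++ Q) := by
  obtain ⟨b1, b2, b3, p1, p2, p3, c1, c2, c3⟩ := nd_parts D P M Q h
  apply nd_glue D P M' Q b1 hb b3 p1 hpw p3
  · intro p hp m' hm'
    obtain ⟨m, hm, hle⟩ := hl m' hm'
    have := c1 p hp m hm
    simp only [rel] at *; omega
  · exact c2
  · intro m' hm' q hq
    obtain ⟨m, hm, hle⟩ := hr m' hm'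
    have := c3 m hm q hq
    simp only [rel] at *; omega

/-- replace the middle, with explicit left constraint from P -/
lemma nd_rep' (D : ℕ) {P M Q M' : List (ℕ × ℕ)} (h : NormalDecomp D (P ++ M ++ Q))
    (hb : ∀ p ∈ M', 1 ≤ p.1 ∧ p.1 ≤ p.2 ∧ p.2 ≤ D)
    (hpw : M'.Pairwise rel)
    (hl : ∀ p ∈ P, ∀ m' ∈ M', p.2 + 2 ≤ m'.1)
    (hr : ∀ m' ∈ M', ∃ m ∈ M, m'.2 ≤ m.2) :
    NormalDecomp D (P ++ M' ++ Q) := by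
  obtain ⟨b1, b2, b3, p1, p2, p3, c1, c2, c3⟩ := nd_parts D P M Q h
  apply nd_glue D P M' Q b1 hb b3 p1 hpw p3 hl c2
  intro m' hm' q hq
  obtain ⟨m, hm, hle⟩ := hr m' hm'
  have := c3 m hm q hq
  simp only [rel] at *; omega

end S12

namespace S12

lemma vec_single (D : ℕ) (p : ℕ × ℕ) : vec D [p] = eI D p := by simp [vec]

lemma pos_vec_zero (D : ℕ) (L : List (ℕ × ℕ)) (h : NormalDecomp D L) (j : ℕ)
    (hnc : ¬ Cov L j) : pos D (vec D L) j = 0 := by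
  rw [pos_vec D L h j, if_neg hnc]

lemma pos_vec_one (D : ℕ) (L : List (ℕ × ℕ)) (h : NormalDecomp D L) (j : ℕ)
    (hc : Cov L j) : pos D (vec D L) j = 1 := by
  rw [pos_vec D L h j, if_pos hc]

lemma nd_del (D : ℕ) (P M Q : List (ℕ × ℕ)) (h : NormalDecomp D (P ++ M ++ Q)) :
    NormalDecomp D (P ++ Q) := by
  have := nd_rep D (M' := []) h (by simp) (by simp) (by simp) (by simp)
  simpa using this

lemma adj_symm (D : ℕ) {x y : Fin D → ZMod 2} (h : Adj D x y) : Adj D y x := by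
  obtain ⟨i, h1, h2, h3, h4, h5⟩ := h
  exact ⟨i, h1, h2, by rwa [add_comm], h5, h4⟩

lemma rg_symm (D : ℕ) {x y : Fin D → ZMod 2}
    (h : Relation.ReflTransGen (Adj D) x y) : Relation.ReflTransGen (Adj D) y x :=
  @Std.Symm.symm _ _ (@Relation.ReflTransGen.stdSymm _ (Adj D) ⟨fun _ _ h => adj_symm D h⟩) _ _ h

lemma add_cancel3 (D : ℕ) (u v w : Fin D → ZMod 2) : (u + v + w) + (u + w) = v := by
  have h : (u + v + w) + (u + w) = (u + u) + (v + (w + w)) := by ring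
  rw [h, vadd_self, vadd_self, add_zero, zero_add]

lemma add_cancel3' (D : ℕ) (u v v' w : Fin D → ZMod 2) :
    (u + v + w) + (u + v' + w) = v + v' := by
  have h : (u + v + w) + (u + v' + w) = (u + u) + ((v + v') + (w + w)) := by ring
  rw [h, vadd_self, vadd_self, add_zero, zero_add]

lemma adj_del (D : ℕ) (P Q : List (ℕ × ℕ)) (a : ℕ)
    (h : NormalDecomp D (P ++ [(a, a)] ++ Q)) :
    Adj D (vec D (P ++ [(a, a)] ++ Q)) (vec D (P ++ Q)) := by
  obtain ⟨b1, b2, b3, p1, p2, p3, c1, c2, c3⟩ := nd_parts D P [(a, a)] Q h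
  have hb := b2 (a, a) (by simp)
  simp only at hb
  have hndPQ : NormalDecomp D (P ++ Q) := nd_del D P [(a, a)] Q h
  have hnc : ∀ j, j = a - 1 ∨ j = a + 1 → ¬ Cov (P ++ [(a, a)] ++ Q) j := by
    rintro j hj ⟨⟨u, v⟩, hp, hc1, hc2⟩
    simp only at hc1 hc2
    rcases List.mem_append.1 hp with hp' | hq
    · rcases List.mem_append.1 hp' with hP | hM
      · have hthis : v + 2 ≤ a := c1 (u, v) hP (a, a) (by simp)
        omega
      · simp only [List.mem_singleton, Prod.mk.injEq] at hM
        omega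
    · have hthis : a + 2 ≤ u := c3 (a, a) (by simp) (u, v) hq
      omega
  have hnc' : ∀ j, j = a - 1 ∨ j = a + 1 → ¬ Cov (P ++ Q) j := by
    intro j hj hc
    apply hnc j hj
    obtain ⟨p, hp, hc2⟩ := hc
    refine ⟨p, ?_, hc2⟩
    rcases List.mem_append.1 hp with h' | h' <;> simp [h']
  refine ⟨a, hb.1, hb.2.2, ?_, ?_, ?_⟩
  · rw [vec_append, vec_append, vec_append, vec_single]
    rw [add_cancel3 D (vec D P) (eI D (a, a)) (vec D Q)]
    exact eI_singleton D a
  · rw [bform_basis D _ a hb.1 hb.2.2,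
      pos_vec_zero D _ h _ (hnc _ (Or.inl rfl)),
      pos_vec_zero D _ h _ (hnc _ (Or.inr rfl)), add_zero]
  · rw [bform_basis D _ a hb.1 hb.2.2,
      pos_vec_zero D _ hndPQ _ (hnc' _ (Or.inl rfl)),
      pos_vec_zero D _ hndPQ _ (hnc' _ (Or.inr rfl)), add_zero]

lemma nd_split (D : ℕ) (P Q : List (ℕ × ℕ)) (a b i : ℕ)
    (h : NormalDecomp D (P ++ [(a, b)] ++ Q)) (h2 : a < i) (h3 : i < b) :
    NormalDecomp D (P ++ [(a, i - 1), (i + 1, b)] ++ Q) := by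
  obtain ⟨b1, b2, b3, p1, p2, p3, c1, c2, c3⟩ := nd_parts D P [(a, b)] Q h
  have hb := b2 (a, b) (by simp)
  simp only at hb
  apply nd_rep D h
  · intro p hp
    simp only [List.mem_cons, List.mem_singleton] at hp
    rcases hp with rfl | rfl | hf
    · simp only; omega
    · simp only; omega
    · simp at hf
  · refine List.Pairwise.cons ?_ (by simp)
    intro q hq
    simp only [List.mem_singleton] at hq
    subst hq
    show i - 1 + 2 ≤ i + 1
    omega
  · intro m' hm'
    refine ⟨(a, b), by simp, ?_⟩
    simp only [List.mem_cons, List.mem_singleton] at hm'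
    rcases hm' with rfl | rfl | hf
    · simp
    · simp only; omega
    · simp at hf
  · intro m' hm'
    refine ⟨(a, b), by simp, ?_⟩
    simp only [List.mem_cons, List.mem_singleton] at hm'
    rcases hm' with rfl | rfl | hf
    · simp only; omega
    · simp
    · simp at hf

lemma adj_split (D : ℕ) (P Q : List (ℕ × ℕ)) (a b i : ℕ)
    (h : NormalDecomp D (P ++ [(a, b)] ++ Q)) (h2 : a < i) (h3 : i < b) :
    Adj D (vec D (P ++ [(a, b)] ++ Q)) (vec D (P ++ [(a, i - 1), (i + 1, b)] ++ Q)) := by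
  obtain ⟨b1, b2, b3, p1, p2, p3, c1, c2, c3⟩ := nd_parts D P [(a, b)] Q h
  have hb := b2 (a, b) (by simp)
  simp only at hb
  have hnd' := nd_split D P Q a b i h h2 h3
  have hi1 : 1 ≤ i := by omega
  have hi2 : i ≤ D := by omega
  refine ⟨i, hi1, hi2, ?_, ?_, ?_⟩
  · rw [vec_append, vec_append, vec_append, vec_append, vec_single, vec_cons, vec_single]
    rw [add_cancel3' D (vec D P) (eI D (a, b)) _ (vec D Q)]
    rw [eI_split D a b i hb.1 h2 h3]
    have : eI D (a, i - 1) + eI D (i + 1, b) + basisVec D i + (eI D (a, i - 1) + eI D (i + 1, b))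
        = (eI D (a, i-1) + eI D (a, i-1)) + ((eI D (i+1, b) + eI D (i+1, b)) + basisVec D i) := by
      ring
    rw [this, vadd_self, vadd_self, zero_add, zero_add]
  · rw [bform_basis D _ i hi1 hi2,
      pos_vec_one D _ h _ ⟨(a, b), by simp, by simp only; omega⟩,
      pos_vec_one D _ h _ ⟨(a, b), by simp, by simp only; omega⟩]
    decide
  · rw [bform_basis D _ i hi1 hi2,
      pos_vec_one D _ hnd' _ ⟨(a, i - 1), by simp, by simp only; omega⟩,
      pos_vec_one D _ hnd' _ ⟨(i + 1, b), by simp, by simp only; omega⟩]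
    decide

end S12

namespace S12

def w (p : ℕ × ℕ) : ℤ :=
  if p.1 % 2 = 0 ∧ p.2 % 2 = 1 then 1 else if p.1 % 2 = 1 ∧ p.2 % 2 = 0 then -1 else 0

lemma uval_nil : uval [] = 0 := rfl

lemma uval_cons (p : ℕ × ℕ) (L : List (ℕ × ℕ)) : uval (p :: L) = w p + uval L := by
  simp only [uval, List.countP_cons, w, decide_eq_true_eq]
  push_cast
  split_ifs with h1 h2
  · omega
  · push_cast; ring
  · push_cast; omega
  · push_cast; ring

lemma uval_append (L M : List (ℕ × ℕ)) : uval (L ++ M) = uval L + uval M := by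
  simp only [uval, List.countP_append]
  push_cast
  ring

/-- cons-normal-form versions of the move lemmas -/
lemma cons_form (P Q : List (ℕ × ℕ)) (p : ℕ × ℕ) : P ++ [p] ++ Q = P ++ p :: Q := by
  simp

lemma cons_form2 (P Q : List (ℕ × ℕ)) (p q : ℕ × ℕ) :
    P ++ [p, q] ++ Q = P ++ p :: q :: Q := by simp

lemma adj_del' (D : ℕ) (P Q : List (ℕ × ℕ)) (a : ℕ)
    (h : NormalDecomp D (P ++ (a, a) :: Q)) :
    Adj D (vec D (P ++ (a, a) :: Q)) (vec D (P ++ Q)) := by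
  rw [← cons_form] at h ⊢
  exact adj_del D P Q a h

lemma nd_del' (D : ℕ) (P Q : List (ℕ × ℕ)) (p : ℕ × ℕ)
    (h : NormalDecomp D (P ++ p :: Q)) : NormalDecomp D (P ++ Q) := by
  rw [← cons_form] at h
  exact nd_del D P [p] Q h

lemma adj_split' (D : ℕ) (P Q : List (ℕ × ℕ)) (a b i : ℕ)
    (h : NormalDecomp D (P ++ (a, b) :: Q)) (h2 : a < i) (h3 : i < b) :
    Adj D (vec D (P ++ (a, b) :: Q)) (vec D (P ++ (a, i - 1) :: (i + 1, b) :: Q)) := by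
  rw [← cons_form, ← cons_form2]
  rw [← cons_form] at h
  exact adj_split D P Q a b i h h2 h3

lemma nd_split' (D : ℕ) (P Q : List (ℕ × ℕ)) (a b i : ℕ)
    (h : NormalDecomp D (P ++ (a, b) :: Q)) (h2 : a < i) (h3 : i < b) :
    NormalDecomp D (P ++ (a, i - 1) :: (i + 1, b) :: Q) := by
  rw [← cons_form2]
  rw [← cons_form] at h
  exact nd_split D P Q a b i h h2 h3

def mu (L : List (ℕ × ℕ)) : ℕ := (L.map (fun p => p.2 + 2 - p.1)).sum

lemma mu_cons (p : ℕ × ℕ) (L : List (ℕ × ℕ)) : mu (p :: L) = (p.2 + 2 - p.1) + mu L := by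
  simp [mu]

lemma mu_append (L M : List (ℕ × ℕ)) : mu (L ++ M) = mu L + mu M := by
  simp [mu]

lemma stage1 (D : ℕ) : ∀ n (L : List (ℕ × ℕ)), NormalDecomp D L → mu L ≤ n →
    ∃ M, NormalDecomp D M ∧ (∀ p ∈ M, p.2 = p.1 + 1) ∧ uval M = uval L ∧
      Relation.ReflTransGen (Adj D) (vec D L) (vec D M) := by
  intro n
  induction n with
  | zero =>
    intro L hnd hmu
    match L with
    | [] => exact ⟨[], hnd, by simp, rfl, .refl⟩
    | p :: T =>
      exfalso
      have hb := ((nd_iff D _).1 hnd).1 p (by simp)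
      rw [mu_cons] at hmu
      omega
  | succ n ih =>
    intro L hnd hmu
    by_cases hall : ∀ p ∈ L, p.2 = p.1 + 1
    · exact ⟨L, hnd, hall, rfl, .refl⟩
    · push_neg at hall
      obtain ⟨p, hp, hne⟩ := hall
      obtain ⟨P, Q, rfl⟩ := List.append_of_mem hp
      obtain ⟨a, b⟩ := p
      have hb := ((nd_iff D _).1 hnd).1 (a, b) (by simp)
      simp only at hb hne
      rcases Nat.lt_or_ge b (a + 2) with hsmall | hbig
      · -- b = a : delete singleton
        have hba : b = a := by omega
        subst hba
        have hadj := adj_del' D P Q b hnd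
        have hnd2 := nd_del' D P Q (b, b) hnd
        have hmu2 : mu (P ++ Q) ≤ n := by
          rw [mu_append] at hmu ⊢
          rw [mu_cons] at hmu
          omega
        obtain ⟨M, m1, m2, m3, m4⟩ := ih (P ++ Q) hnd2 hmu2
        refine ⟨M, m1, m2, ?_, .head hadj m4⟩
        rw [m3, uval_append, uval_append, uval_cons]
        have : w (b, b) = 0 := by
          simp only [w]
          split_ifs <;> omega
        rw [this]; ring
      · -- b ≥ a + 2 : split at a+1 then delete (a,a)
        have hadj1 := adj_split' D P Q a b (a + 1) hnd (by omega) (by omega)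
        have hnd1 := nd_split' D P Q a b (a + 1) hnd (by omega) (by omega)
        have e1 : a + 1 - 1 = a := by omega
        rw [e1] at hadj1 hnd1
        have hadj2 := adj_del' D P ((a + 1 + 1, b) :: Q) a hnd1
        have hnd2 := nd_del' D P ((a + 1 + 1, b) :: Q) (a, a) hnd1
        have hmu2 : mu (P ++ (a + 1 + 1, b) :: Q) ≤ n := by
          rw [mu_append, mu_cons] at hmu ⊢
          omega
        obtain ⟨M, m1, m2, m3, m4⟩ := ih _ hnd2 hmu2
        refine ⟨M, m1, m2, ?_, .head hadj1 (.head hadj2 m4)⟩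
        rw [m3, uval_append, uval_append, uval_cons, uval_cons]
        have : w (a + 1 + 1, b) = w (a, b) := by
          simp only [w]
          have e2 : (a + 1 + 1) % 2 = a % 2 := by omega
          rw [e2]
        rw [this]

end S12

namespace S12

lemma assoc1 (P X : List (ℕ × ℕ)) (p : ℕ × ℕ) : (P ++ [p]) ++ X = P ++ p :: X := by simp

lemma nd_rep2 (D : ℕ) {P M Q M' : List (ℕ × ℕ)} (h : NormalDecomp D (P ++ M ++ Q))
    (hb : ∀ p ∈ M', 1 ≤ p.1 ∧ p.1 ≤ p.2 ∧ p.2 ≤ D)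
    (hpw : M'.Pairwise rel)
    (hPM : ∀ p ∈ P, ∀ m' ∈ M', p.2 + 2 ≤ m'.1)
    (hMQ : ∀ m' ∈ M', ∀ q ∈ Q, m'.2 + 2 ≤ q.1) :
    NormalDecomp D (P ++ M' ++ Q) := by
  obtain ⟨b1, b2, b3, p1, p2, p3, c1, c2, c3⟩ := nd_parts D P M Q h
  exact nd_glue D P M' Q b1 hb b3 p1 hpw p3 hPM c2 hMQ

lemma pw_single (p : ℕ × ℕ) : List.Pairwise rel [p] := by simp

lemma pw_two (p q : ℕ × ℕ) (h : p.2 + 2 ≤ q.1) : List.Pairwise rel [p, q] := by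
  refine List.Pairwise.cons ?_ (pw_single q)
  intro q' hq'
  simp only [List.mem_singleton] at hq'
  subst hq'
  exact h

lemma pw_three (p q s : ℕ × ℕ) (h1 : p.2 + 2 ≤ q.1) (h2 : q.2 + 2 ≤ s.1)
    (h3 : p.2 + 2 ≤ s.1) : List.Pairwise rel [p, q, s] := by
  refine List.Pairwise.cons ?_ (pw_two q s h2)
  intro q' hq'
  simp only [List.mem_cons, List.mem_singleton] at hq'
  rcases hq' with rfl | rfl | hf
  · exact h1
  · exact h3
  · simp at hf

/-- dissolve an interval of odd length (equal endpoint parity) -/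
lemma dissolve (D : ℕ) : ∀ n (P Q : List (ℕ × ℕ)) (a b : ℕ), b - a ≤ n →
    a % 2 = b % 2 → NormalDecomp D (P ++ (a, b) :: Q) →
    Relation.ReflTransGen (Adj D) (vec D (P ++ (a, b) :: Q)) (vec D (P ++ Q)) := by
  intro n
  induction n with
  | zero =>
    intro P Q a b hn hpar h
    have hb : 1 ≤ a ∧ a ≤ b ∧ b ≤ D := ((nd_iff D _).1 h).1 (a, b) (by simp)
    have hba : b = a := by omega
    subst hba
    exact .single (adj_del' D P Q b h)
  | succ n ih =>
    intro P Q a b hn hpar h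
    have hb : 1 ≤ a ∧ a ≤ b ∧ b ≤ D := ((nd_iff D _).1 h).1 (a, b) (by simp)
    rcases Nat.eq_or_lt_of_le hb.2.1 with hba | hba
    · subst hba
      exact .single (adj_del' D P Q a h)
    · have hab2 : a + 2 ≤ b := by omega
      have s1 := adj_split' D P Q a b (a + 1) h (by omega) (by omega)
      have hnd1 := nd_split' D P Q a b (a + 1) h (by omega) (by omega)
      have e1 : a + 1 - 1 = a := by omega
      rw [e1] at s1 hnd1
      have s2 := adj_del' D P ((a + 1 + 1, b) :: Q) a hnd1
      have hnd2 := nd_del' D P ((a + 1 + 1, b) :: Q) (a, a) hnd1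
      have hrec := ih P Q (a + 1 + 1) b (by omega) (by omega) hnd2
      exact .head s1 (.head s2 hrec)

/-- shift a domino right by 2 -/
lemma shift_right (D : ℕ) (P Q : List (ℕ × ℕ)) (a : ℕ)
    (h : NormalDecomp D (P ++ (a, a + 1) :: Q)) (hD : a + 3 ≤ D)
    (hQ : ∀ q ∈ Q, a + 5 ≤ q.1) :
    Relation.ReflTransGen (Adj D) (vec D (P ++ (a, a + 1) :: Q)) (vec D (P ++ (a + 2, a + 3) :: Q))
      ∧ NormalDecomp D (P ++ (a + 2, a + 3) :: Q) := by
  have h' := h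
  rw [← cons_form] at h'
  obtain ⟨b1, b2, b3, p1, p2, p3, c1, c2, c3⟩ := nd_parts D P _ Q h'
  have hba : 1 ≤ a ∧ a ≤ a + 1 ∧ a + 1 ≤ D := b2 (a, a + 1) (by simp)
  -- L1 = P ++ (a,a+1) :: (a+3,a+3) :: Q
  have hnd1 : NormalDecomp D (P ++ (a, a + 1) :: (a + 3, a + 3) :: Q) := by
    rw [← cons_form2]
    apply nd_rep2 D h'
    · intro p hp
      simp only [List.mem_cons, List.mem_singleton] at hp
      rcases hp with rfl | rfl | hf
      · exact hba
      · refine ⟨by omega, by omega, by omega⟩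
      · simp at hf
    · exact pw_two _ _ (by show a + 1 + 2 ≤ a + 3; omega)
    · intro p hp m' hm'
      have hc := c1 p hp (a, a + 1) (by simp)
      simp only [List.mem_cons, List.mem_singleton] at hm'
      rcases hm' with rfl | rfl | hf
      · exact hc
      · show p.2 + 2 ≤ a + 3
        have : p.2 + 2 ≤ a := hc
        omega
      · simp at hf
    · intro m' hm' q hq
      have hc := hQ q hq
      simp only [List.mem_cons, List.mem_singleton] at hm'
      rcases hm' with rfl | rfl | hf
      · show a + 1 + 2 ≤ q.1; omega
      · show a + 3 + 2 ≤ q.1; omega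
      · simp at hf
  have s1 : Adj D (vec D (P ++ (a, a + 1) :: (a + 3, a + 3) :: Q))
      (vec D (P ++ (a, a + 1) :: Q)) := by
    have := adj_del' D (P ++ [(a, a + 1)]) Q (a + 3) (by rw [assoc1]; exact hnd1)
    rw [assoc1, assoc1] at this
    exact this
  -- L2 = P ++ (a, a+3) :: Q
  have hnd2 : NormalDecomp D (P ++ (a, a + 3) :: Q) := by
    rw [← cons_form]
    apply nd_rep2 D h'
    · intro p hp
      simp only [List.mem_singleton] at hp
      subst hp
      exact ⟨hba.1, by omega, by omega⟩
    · exact pw_single _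
    · intro p hp m' hm'
      simp only [List.mem_singleton] at hm'
      subst hm'
      exact c1 p hp (a, a + 1) (by simp)
    · intro m' hm' q hq
      simp only [List.mem_singleton] at hm'
      subst hm'
      show a + 3 + 2 ≤ q.1
      exact hQ q hq
  have s2 : Adj D (vec D (P ++ (a, a + 3) :: Q))
      (vec D (P ++ (a, a + 1) :: (a + 3, a + 3) :: Q)) := by
    have := adj_split' D P Q a (a + 3) (a + 2) hnd2 (by omega) (by omega)
    have e1 : a + 2 - 1 = a + 1 := by omega
    have e2 : a + 2 + 1 = a + 3 := by omega
    rw [e1, e2] at this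
    exact this
  -- L3 = P ++ (a,a) :: (a+2,a+3) :: Q
  have s3 := adj_split' D P Q a (a + 3) (a + 1) hnd2 (by omega) (by omega)
  have hnd3 := nd_split' D P Q a (a + 3) (a + 1) hnd2 (by omega) (by omega)
  have e1 : a + 1 - 1 = a := by omega
  have e2 : a + 1 + 1 = a + 2 := by omega
  rw [e1, e2] at s3 hnd3
  -- L4 = P ++ (a+2,a+3) :: Q
  have s4 := adj_del' D P ((a + 2, a + 3) :: Q) a hnd3
  have hnd4 := nd_del' D P ((a + 2, a + 3) :: Q) (a, a) hnd3
  exact ⟨.head (adj_symm D s1) (.head (adj_symm D s2) (.head s3 (.single s4))), hnd4⟩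

/-- shift a domino left by 2 -/
lemma shift_left (D : ℕ) (P Q : List (ℕ × ℕ)) (a : ℕ)
    (h : NormalDecomp D (P ++ (a, a + 1) :: Q)) (ha : 3 ≤ a)
    (hP : ∀ p ∈ P, p.2 + 4 ≤ a) :
    Relation.ReflTransGen (Adj D) (vec D (P ++ (a, a + 1) :: Q)) (vec D (P ++ (a - 2, a - 1) :: Q))
      ∧ NormalDecomp D (P ++ (a - 2, a - 1) :: Q) := by
  have h' := h
  rw [← cons_form] at h'
  obtain ⟨b1, b2, b3, p1, p2, p3, c1, c2, c3⟩ := nd_parts D P _ Q h'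
  have hba : 1 ≤ a ∧ a ≤ a + 1 ∧ a + 1 ≤ D := b2 (a, a + 1) (by simp)
  have hQ : ∀ q ∈ Q, a + 1 + 2 ≤ q.1 := fun q hq => c3 (a, a + 1) (by simp) q hq
  -- L1 = P ++ (a-2,a-2) :: (a,a+1) :: Q
  have hnd1 : NormalDecomp D (P ++ (a - 2, a - 2) :: (a, a + 1) :: Q) := by
    rw [← cons_form2]
    apply nd_rep2 D h'
    · intro p hp
      simp only [List.mem_cons, List.mem_singleton] at hp
      rcases hp with rfl | rfl | hf
      · refine ⟨by omega, by omega, by omega⟩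
      · exact hba
      · simp at hf
    · exact pw_two _ _ (by show a - 2 + 2 ≤ a; omega)
    · intro p hp m' hm'
      have hc := hP p hp
      simp only [List.mem_cons, List.mem_singleton] at hm'
      rcases hm' with rfl | rfl | hf
      · show p.2 + 2 ≤ a - 2; omega
      · show p.2 + 2 ≤ a; omega
      · simp at hf
    · intro m' hm' q hq
      have hc := hQ q hq
      simp only [List.mem_cons, List.mem_singleton] at hm'
      rcases hm' with rfl | rfl | hf
      · show a - 2 + 2 ≤ q.1; omega
      · show a + 1 + 2 ≤ q.1; omega
      · simp at hf
  have s1 : Adj D (vec D (P ++ (a - 2, a - 2) :: (a, a + 1) :: Q))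
      (vec D (P ++ (a, a + 1) :: Q)) := adj_del' D P ((a, a + 1) :: Q) (a - 2) hnd1
  -- L2 = P ++ (a-2,a+1) :: Q
  have hnd2 : NormalDecomp D (P ++ (a - 2, a + 1) :: Q) := by
    rw [← cons_form]
    apply nd_rep2 D h'
    · intro p hp
      simp only [List.mem_singleton] at hp
      subst hp
      exact ⟨by omega, by omega, by omega⟩
    · exact pw_single _
    · intro p hp m' hm'
      simp only [List.mem_singleton] at hm'
      subst hm'
      show p.2 + 2 ≤ a - 2
      have := hP p hp
      omega
    · intro m' hm' q hq
      simp only [List.mem_singleton] at hm'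
      subst hm'
      show a + 1 + 2 ≤ q.1
      exact hQ q hq
  have s2 : Adj D (vec D (P ++ (a - 2, a + 1) :: Q))
      (vec D (P ++ (a - 2, a - 2) :: (a, a + 1) :: Q)) := by
    have := adj_split' D P Q (a - 2) (a + 1) (a - 1) hnd2 (by omega) (by omega)
    have e1 : a - 1 - 1 = a - 2 := by omega
    have e2 : a - 1 + 1 = a := by omega
    rw [e1, e2] at this
    exact this
  -- L3 = P ++ (a-2,a-1) :: (a+1,a+1) :: Q
  have s3 : Adj D (vec D (P ++ (a - 2, a + 1) :: Q))
      (vec D (P ++ (a - 2, a - 1) :: (a + 1, a + 1) :: Q)) := by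
    exact adj_split' D P Q (a - 2) (a + 1) a hnd2 (by omega) (by omega)
  have hnd3 : NormalDecomp D (P ++ (a - 2, a - 1) :: (a + 1, a + 1) :: Q) := by
    exact nd_split' D P Q (a - 2) (a + 1) a hnd2 (by omega) (by omega)
  -- L4 = P ++ (a-2,a-1) :: Q
  have s4 : Adj D (vec D (P ++ (a - 2, a - 1) :: (a + 1, a + 1) :: Q))
      (vec D (P ++ (a - 2, a - 1) :: Q)) := by
    have := adj_del' D (P ++ [(a - 2, a - 1)]) Q (a + 1) (by rw [assoc1]; exact hnd3)
    rw [assoc1, assoc1] at this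
    exact this
  have hnd4 : NormalDecomp D (P ++ (a - 2, a - 1) :: Q) := by
    have := nd_del' D (P ++ [(a - 2, a - 1)]) Q (a + 1, a + 1) (by rw [assoc1]; exact hnd3)
    rw [assoc1] at this
    exact this
  exact ⟨.head (adj_symm D s1) (.head (adj_symm D s2) (.head s3 (.single s4))), hnd4⟩

end S12

namespace S12

lemma annihilate (D : ℕ) : ∀ n (P Q : List (ℕ × ℕ)) (a c : ℕ), c - a ≤ n →
    NormalDecomp D (P ++ (a, a + 1) :: (c, c + 1) :: Q) → (a + c) % 2 = 1 →
    Relation.ReflTransGen (Adj D) (vec D (P ++ (a, a + 1) :: (c, c + 1) :: Q)) (vec D (P ++ Q)) := by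
  intro n
  induction n with
  | zero =>
    intro P Q a c hn h hpar
    exfalso
    have h' := h
    rw [← cons_form2] at h'
    obtain ⟨b1, b2, b3, p1, p2, p3, c1, c2, c3⟩ := nd_parts D P _ Q h'
    have hrel : a + 1 + 2 ≤ c := List.rel_of_pairwise_cons p2 (List.mem_singleton.2 rfl)
    omega
  | succ n ih =>
    intro P Q a c hn h0 hpar
    have h0' := h0
    rw [← cons_form2] at h0'
    obtain ⟨b1, b2, b3, p1, p2, p3, c1, c2, c3⟩ := nd_parts D P _ Q h0'
    have hba : 1 ≤ a ∧ a ≤ a + 1 ∧ a + 1 ≤ D := b2 (a, a + 1) (by simp)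
    have hbc : 1 ≤ c ∧ c ≤ c + 1 ∧ c + 1 ≤ D := b2 (c, c + 1) (by simp)
    have hrel : a + 1 + 2 ≤ c := List.rel_of_pairwise_cons p2 (List.mem_singleton.2 rfl)
    rcases Nat.lt_or_ge c (a + 5) with hbase | hshift
    · -- c = a + 3 : merge then dissolve
      have hc : c = a + 3 := by omega
      subst hc
      -- L1 = P ++ (a, a+4) :: Q
      have hnd1 : NormalDecomp D (P ++ (a, a + 4) :: Q) := by
        rw [← cons_form]
        apply nd_rep2 D h0'
        · intro p hp
          simp only [List.mem_singleton] at hp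
          subst hp
          exact ⟨hba.1, by omega, by omega⟩
        · exact pw_single _
        · intro p hp m' hm'
          simp only [List.mem_singleton] at hm'
          subst hm'
          exact c1 p hp (a, a + 1) (by simp)
        · intro m' hm' q hq
          simp only [List.mem_singleton] at hm'
          subst hm'
          show a + 4 + 2 ≤ q.1
          have := c3 (a + 3, a + 3 + 1) (by simp) q hq
          have h2 : a + 3 + 1 + 2 ≤ q.1 := this
          omega
      have s1 : Adj D (vec D (P ++ (a, a + 4) :: Q))
          (vec D (P ++ (a, a + 1) :: (a + 3, a + 3 + 1) :: Q)) := by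
        have := adj_split' D P Q a (a + 4) (a + 2) hnd1 (by omega) (by omega)
        have e1 : a + 2 - 1 = a + 1 := by omega
        have e2 : a + 2 + 1 = a + 3 := by omega
        have e3 : a + 3 + 1 = a + 4 := by omega
        rw [e1, e2] at this
        rw [e3]
        exact this
      exact .head (adj_symm D s1) (dissolve D (a + 4) P Q a (a + 4) (by omega) (by omega) hnd1)
    · -- shift right and recurse
      have hsr := shift_right D P ((c, c + 1) :: Q) a h0 (by omega)
        (by
          intro q hq
          rcases List.mem_cons.1 hq with rfl | hq'
          · simp only
            omega
          · have := c3 (c, c + 1) (by simp) q hq'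
            have h2 : c + 1 + 2 ≤ q.1 := this
            omega)
      have hrec := ih P Q (a + 2) c (by omega) hsr.2 (by omega)
      exact .trans hsr.1 hrec

/-- move a domino left to its final position m -/
lemma move_to (D : ℕ) : ∀ k (P Q : List (ℕ × ℕ)) (a m : ℕ), a - m = 2 * k → m ≤ a →
    NormalDecomp D (P ++ (a, a + 1) :: Q) → (∀ p ∈ P, p.2 + 2 ≤ m) → 1 ≤ m →
    Relation.ReflTransGen (Adj D) (vec D (P ++ (a, a + 1) :: Q)) (vec D (P ++ (m, m + 1) :: Q))
      ∧ NormalDecomp D (P ++ (m, m + 1) :: Q) := by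
  intro k
  induction k with
  | zero =>
    intro P Q a m hk hma h hP hm
    have : a = m := by omega
    subst this
    exact ⟨.refl, h⟩
  | succ k ih =>
    intro P Q a m hk hma h hP hm
    have ha3 : 3 ≤ a := by omega
    have hsl := shift_left D P Q a h ha3 (by intro p hp; have := hP p hp; omega)
    have e1 : a - 2 + 1 = a - 1 := by omega
    rw [← e1] at hsl
    have hrec := ih P Q (a - 2) m (by omega) (by omega) hsl.2 hP hm
    exact ⟨.trans hsl.1 hrec.1, hrec.2⟩

end S12

namespace S12

def canonList (u : ℤ) : List (ℕ × ℕ) :=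
  (List.range u.natAbs).map (fun j => if 0 ≤ u then (4 * j + 2, 4 * j + 3) else (4 * j + 1, 4 * j + 2))

lemma find_opp : ∀ (M : List (ℕ × ℕ)),
    (∃ p ∈ M, ∃ q ∈ M, p.1 % 2 ≠ q.1 % 2) →
    ∃ P p q Q, M = P ++ p :: q :: Q ∧ p.1 % 2 ≠ q.1 % 2 := by
  intro M
  induction M with
  | nil => rintro ⟨p, hp, _⟩; simp at hp
  | cons x T ih =>
    rintro ⟨p, hp, q, hq, hpq⟩
    match T with
    | [] =>
      simp only [List.mem_singleton] at hp hq
      subst hp; subst hq; exact absurd rfl hpq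
    | y :: T' =>
      by_cases hxy : x.1 % 2 = y.1 % 2
      · have hT : ∃ p ∈ y :: T', ∃ q ∈ y :: T', p.1 % 2 ≠ q.1 % 2 := by
          rcases List.mem_cons.1 hp with rfl | hp'
          · rcases List.mem_cons.1 hq with rfl | hq'
            · exact absurd rfl hpq
            · exact ⟨y, by simp, q, hq', by omega⟩
          · rcases List.mem_cons.1 hq with rfl | hq'
            · exact ⟨p, hp', y, by simp, by omega⟩
            · exact ⟨p, hp', q, hq', hpq⟩
        obtain ⟨P, p', q', Q, heq, hne⟩ := ih hT
        exact ⟨x :: P, p', q', Q, by rw [heq]; rfl, hne⟩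
      · exact ⟨[], x, y, T', rfl, hxy⟩

lemma uval_opp_pair (a c : ℕ) (h : (a + c) % 2 = 1) : w (a, a + 1) + w (c, c + 1) = 0 := by
  simp only [w]
  split_ifs <;> omega

lemma uval_all_same (m : ℕ) (hm : m % 2 = 0 ∨ m % 2 = 1) :
    ∀ (M : List (ℕ × ℕ)), (∀ p ∈ M, p.2 = p.1 + 1) → (∀ p ∈ M, p.1 % 2 = m % 2) →
    uval M = if m % 2 = 0 then (M.length : ℤ) else -(M.length : ℤ) := by
  intro M
  induction M with
  | nil => intro _ _; simp [uval_nil]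
  | cons p T ih =>
    intro hdom hpar
    have h1 := hdom p (by simp)
    have h2 := hpar p (by simp)
    have hw : w p = if m % 2 = 0 then 1 else -1 := by
      simp only [w, h1]
      split_ifs <;> omega
    rw [uval_cons, hw, ih (fun q hq => hdom q (by simp [hq])) (fun q hq => hpar q (by simp [hq]))]
    simp only [List.length_cons]
    split_ifs <;> push_cast <;> ring

lemma pack (D : ℕ) : ∀ (M P : List (ℕ × ℕ)) (m : ℕ), NormalDecomp D (P ++ M) →
    (∀ p ∈ M, p.2 = p.1 + 1) → (∀ p ∈ M, m ≤ p.1 ∧ p.1 % 2 = m % 2) →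
    (∀ p ∈ P, p.2 + 2 ≤ m) → 1 ≤ m →
    Relation.ReflTransGen (Adj D) (vec D (P ++ M))
      (vec D (P ++ (List.range M.length).map (fun j => (m + 4 * j, m + 4 * j + 1)))) := by
  intro M
  induction M with
  | nil => intro P m _ _ _ _ _; simp; exact .refl
  | cons p T ih =>
    intro P m hnd hdom hpar hP hm
    obtain ⟨a, b⟩ := p
    have hb : b = a + 1 := hdom (a, b) (by simp)
    subst hb
    have hpa := hpar (a, a + 1) (by simp)
    -- move (a, a+1) to (m, m+1)
    have hmt := move_to D ((a - m) / 2) P T a m (by omega) hpa.1 hnd hP hm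
    -- tail facts
    have hnd' := hmt.2
    rw [← assoc1] at hnd'
    have hndT : NormalDecomp D ((P ++ [(m, m + 1)]) ++ T) := hnd'
    -- pairwise facts from original for T elements
    have h' := hnd
    rw [← cons_form] at h'
    obtain ⟨b1, b2, b3, p1, p2, p3, c1, c2, c3⟩ := nd_parts D P _ T h'
    have hrec := ih (P ++ [(m, m + 1)]) (m + 4) hndT
      (fun q hq => hdom q (by simp [hq]))
      (by
        intro q hq
        have hq1 := (hpar q (by simp [hq])).2
        have hq2 := c3 (a, a + 1) (by simp) q hq
        have hq3 : a + 1 + 2 ≤ q.1 := hq2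
        constructor
        · omega
        · omega)
      (by
        intro q hq
        rcases List.mem_append.1 hq with hq' | hq''
        · have := hP q hq'; omega
        · simp only [List.mem_singleton] at hq''
          subst hq''
          simp only
          omega)
      (by omega)
    have hlist : (P ++ [(m, m + 1)]) ++ (List.range T.length).map
          (fun j => (m + 4 + 4 * j, m + 4 + 4 * j + 1))
        = P ++ (List.range ((a, a + 1) :: T).length).map (fun j => (m + 4 * j, m + 4 * j + 1)) := by
      rw [List.append_assoc, List.singleton_append, List.length_cons,
        List.range_succ_eq_map, List.map_cons, List.map_map]
      congr 1
      rw [show ((m + 4 * 0, m + 4 * 0 + 1) : ℕ × ℕ) = (m, m + 1) by norm_num]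
      congr 1
      apply List.map_congr_left
      intro j hj
      simp only [Function.comp_apply, Prod.mk.injEq]
      omega
    rw [hlist] at hrec
    have hmid : vec D (P ++ (m, m + 1) :: T) = vec D ((P ++ [(m, m + 1)]) ++ T) := by
      rw [assoc1]
    exact .trans hmt.1 (hmid ▸ hrec)

end S12

namespace S12

lemma canon_nonneg (k : ℕ) :
    canonList (k : ℤ) = (List.range k).map (fun j => (2 + 4 * j, 2 + 4 * j + 1)) := by
  unfold canonList
  rw [Int.natAbs_natCast]
  apply List.map_congr_left
  intro j hj
  rw [if_pos (by positivity)]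
  simp only [Prod.mk.injEq]
  omega

lemma canon_neg (k : ℕ) (hk : 1 ≤ k) :
    canonList (-(k : ℤ)) = (List.range k).map (fun j => (1 + 4 * j, 1 + 4 * j + 1)) := by
  unfold canonList
  rw [Int.natAbs_neg, Int.natAbs_natCast]
  apply List.map_congr_left
  intro j hj
  rw [if_neg (by omega)]
  simp only [Prod.mk.injEq]
  omega

lemma canon_zero : canonList (uval []) = [] := rfl

lemma stage2 (D : ℕ) : ∀ n (M : List (ℕ × ℕ)), M.length ≤ n → NormalDecomp D M →
    (∀ p ∈ M, p.2 = p.1 + 1) →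
    Relation.ReflTransGen (Adj D) (vec D M) (vec D (canonList (uval M))) := by
  intro n
  induction n with
  | zero =>
    intro M hlen hnd hdom
    have hM : M = [] := List.length_eq_zero_iff.1 (by omega)
    subst hM
    exact .refl
  | succ n ih =>
    intro M hlen hnd hdom
    by_cases hall : ∀ p ∈ M, ∀ q ∈ M, p.1 % 2 = q.1 % 2
    · match M, hnd, hdom, hall, hlen with
      | [], _, _, _, _ => exact .refl
      | (a, b) :: T, hnd, hdom, hall, hlen =>
        have hb : b = a + 1 := hdom (a, b) (by simp)
        subst hb
        have hbd := ((nd_iff D _).1 hnd).1 (a, a + 1) (by simp)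
        have ha1 : 1 ≤ a := hbd.1
        rcases Nat.mod_two_eq_zero_or_one a with h0 | h1
        · -- even: pack at m = 2
          have hp := pack D ((a, a + 1) :: T) [] 2 hnd hdom
            (by
              intro q hq
              have hq2 := hall q hq (a, a + 1) (by simp)
              have hq1 := ((nd_iff D _).1 hnd).1 q hq
              constructor
              · omega
              · omega)
            (by simp) (by norm_num)
          have huv : uval ((a, a + 1) :: T) = (((a, a + 1) :: T).length : ℤ) := by
            have := uval_all_same 2 (by norm_num) ((a, a + 1) :: T) hdom
              (by intro q hq; have := hall q hq (a, a + 1) (by simp); omega)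
            simpa using this
          rw [huv, canon_nonneg]
          exact hp
        · -- odd: pack at m = 1
          have hp := pack D ((a, a + 1) :: T) [] 1 hnd hdom
            (by
              intro q hq
              have hq2 := hall q hq (a, a + 1) (by simp)
              have hq1 := ((nd_iff D _).1 hnd).1 q hq
              constructor
              · omega
              · omega)
            (by simp) (by norm_num)
          have huv : uval ((a, a + 1) :: T) = -(((a, a + 1) :: T).length : ℤ) := by
            have := uval_all_same 1 (by norm_num) ((a, a + 1) :: T) hdom
              (by intro q hq; have := hall q hq (a, a + 1) (by simp); omega)
            simpa using this
          rw [huv, canon_neg _ (by simp)]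
          exact hp
    · push_neg at hall
      obtain ⟨p0, hp0, q0, hq0, hne0⟩ := hall
      obtain ⟨P, p', q', Q, heq, hne⟩ := find_opp M ⟨p0, hp0, q0, hq0, hne0⟩
      subst heq
      obtain ⟨a, b⟩ := p'
      obtain ⟨c, d⟩ := q'
      have hb : b = a + 1 := hdom (a, b) (by simp)
      have hd : d = c + 1 := hdom (c, d) (by simp)
      subst hb; subst hd
      simp only at hne
      have hpar : (a + c) % 2 = 1 := by omega
      have hann := annihilate D c P Q a c (by omega) hnd hpar
      have hndPQ : NormalDecomp D (P ++ Q) :=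
        nd_del' D P Q (c, c + 1) (nd_del' D P ((c, c + 1) :: Q) (a, a + 1) hnd)
      have huv : uval (P ++ Q) = uval (P ++ (a, a + 1) :: (c, c + 1) :: Q) := by
        have hw : w (a, a + 1) + w (c, c + 1) = 0 := uval_opp_pair a c hpar
        rw [uval_append, uval_append, uval_cons, uval_cons]
        omega
      have hlen2 : (P ++ Q).length ≤ n := by
        simp only [List.length_append, List.length_cons] at hlen ⊢
        omega
      have hdom2 : ∀ p ∈ P ++ Q, p.2 = p.1 + 1 := by
        intro p hp
        apply hdom
        rcases List.mem_append.1 hp with h' | h' <;> simp [h']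
      have hrec := ih (P ++ Q) hlen2 hndPQ hdom2
      rw [huv] at hrec
      exact .trans hann hrec

lemma reach_canon (D : ℕ) (L : List (ℕ × ℕ)) (hnd : NormalDecomp D L) :
    Relation.ReflTransGen (Adj D) (vec D L) (vec D (canonList (uval L))) := by
  obtain ⟨M, m1, m2, m3, m4⟩ := stage1 D (mu L) L hnd le_rfl
  have h2 := stage2 D M.length M le_rfl m1 m2
  rw [m3] at h2
  exact .trans m4 h2

end S12

namespace S12

lemma nd_tail (D : ℕ) (p : ℕ × ℕ) (T : List (ℕ × ℕ)) (h : NormalDecomp D (p :: T)) :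
    NormalDecomp D T := by
  rw [nd_iff] at h ⊢
  exact ⟨fun q hq => h.1 q (by simp [hq]), (List.pairwise_cons.1 h.2).2⟩

lemma pos_zero (D j : ℕ) : pos D (0 : Fin D → ZMod 2) j = 0 := by
  unfold pos; split_ifs <;> simp

lemma cov_head_min (D : ℕ) (a b : ℕ) (T : List (ℕ × ℕ))
    (h : NormalDecomp D ((a, b) :: T)) : ∀ j, Cov ((a, b) :: T) j → a ≤ j := by
  rw [nd_iff] at h
  rintro j ⟨p, hp, h1, h2⟩
  rcases List.mem_cons.1 hp with rfl | hp'
  · exact h1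
  · have hr : b + 2 ≤ p.1 := List.rel_of_pairwise_cons h.2 hp'
    have hb := h.1 (a, b) (by simp)
    simp only at hb
    omega

lemma unique_decomp (D : ℕ) : ∀ (L L' : List (ℕ × ℕ)), NormalDecomp D L →
    NormalDecomp D L' → vec D L = vec D L' → L = L' := by
  intro L
  induction L with
  | nil =>
    intro L' _ hnd' hv
    match L', hnd' with
    | [], _ => rfl
    | (a, b) :: T, hnd' =>
      exfalso
      have hb := ((nd_iff D _).1 hnd').1 (a, b) (by simp)
      simp only at hb
      have h1 : pos D (vec D ((a, b) :: T)) a = 1 :=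
        pos_vec_one D _ hnd' a ⟨(a, b), by simp, by simp only; omega⟩
      rw [← hv] at h1
      rw [show vec D [] = 0 from rfl, pos_zero] at h1
      exact absurd h1 (by decide)
  | cons p T ih =>
    intro L' hnd hnd' hv
    obtain ⟨a, b⟩ := p
    match L', hnd' with
    | [], hnd' =>
      exfalso
      have hb := ((nd_iff D _).1 hnd).1 (a, b) (by simp)
      simp only at hb
      have h1 : pos D (vec D ((a, b) :: T)) a = 1 :=
        pos_vec_one D _ hnd a ⟨(a, b), by simp, by simp only; omega⟩
      rw [hv] at h1
      rw [show vec D [] = 0 from rfl, pos_zero] at h1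
      exact absurd h1 (by decide)
    | (a', b') :: T', hnd' =>
      have hb := ((nd_iff D _).1 hnd).1 (a, b) (by simp)
      have hb' := ((nd_iff D _).1 hnd').1 (a', b') (by simp)
      simp only at hb hb'
      have hcov : ∀ j, Cov ((a, b) :: T) j ↔ Cov ((a', b') :: T') j := by
        intro j
        have := congrArg (fun y => pos D y j) hv
        rw [pos_vec D _ hnd j, pos_vec D _ hnd' j] at this
        constructor
        · intro hc
          by_contra hnc
          rw [if_pos hc, if_neg hnc] at this
          exact absurd this (by decide)
        · intro hc
          by_contra hnc
          rw [if_neg hnc, if_pos hc] at this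
          exact absurd this (by decide)
      have haa : a = a' := by
        have h1 : Cov ((a', b') :: T') a := (hcov a).1 ⟨(a, b), by simp, by simp only; omega⟩
        have h2 : Cov ((a, b) :: T) a' := (hcov a').2 ⟨(a', b'), by simp, by simp only; omega⟩
        have h3 := cov_head_min D a' b' T' hnd' a h1
        have h4 := cov_head_min D a b T hnd a' h2
        omega
      subst haa
      have hbb : b = b' := by
        by_contra hne
        rcases Nat.lt_or_ge b b' with hlt | hge
        · have h1 : Cov ((a, b') :: T') (b + 1) := ⟨(a, b'), by simp, by simp only; omega⟩
          have h2 := (hcov (b + 1)).2 h1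
          obtain ⟨p, hp, hc1, hc2⟩ := h2
          rcases List.mem_cons.1 hp with rfl | hp'
          · simp only at hc1 hc2; omega
          · have hr : b + 2 ≤ p.1 := List.rel_of_pairwise_cons ((nd_iff D _).1 hnd).2 hp'
            omega
        · have hlt' : b' < b := by omega
          have h1 : Cov ((a, b) :: T) (b' + 1) := ⟨(a, b), by simp, by simp only; omega⟩
          have h2 := (hcov (b' + 1)).1 h1
          obtain ⟨p, hp, hc1, hc2⟩ := h2
          rcases List.mem_cons.1 hp with rfl | hp'
          · simp only at hc1 hc2; omega
          · have hr : b' + 2 ≤ p.1 := List.rel_of_pairwise_cons ((nd_iff D _).1 hnd').2 hp'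
            omega
      subst hbb
      have hT : vec D T = vec D T' := by
        have h1 : vec D ((a, b) :: T) = eI D (a, b) + vec D T := vec_cons D _ _
        have h2 : vec D ((a, b) :: T') = eI D (a, b) + vec D T' := vec_cons D _ _
        have h3 : eI D (a, b) + vec D ((a, b) :: T) = vec D T := by
          rw [h1, ← add_assoc, vadd_self, zero_add]
        have h4 : eI D (a, b) + vec D ((a, b) :: T') = vec D T' := by
          rw [h2, ← add_assoc, vadd_self, zero_add]
        rw [← h3, ← h4, hv]
      rw [ih T' (nd_tail D _ _ hnd) (nd_tail D _ _ hnd') hT]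

end S12

namespace S12

def build (D : ℕ) (x : Fin D → ZMod 2) : ℕ → List (ℕ × ℕ)
  | 0 => []
  | f + 1 =>
    if pos D x (D - f) = 1 then
      match build D x f with
      | (a, b) :: T => if D - f + 1 = a then (D - f, b) :: T else (D - f, D - f) :: (a, b) :: T
      | [] => [(D - f, D - f)]
    else build D x f

lemma build_spec (D : ℕ) (x : Fin D → ZMod 2) : ∀ f, f ≤ D →
    (∀ p ∈ build D x f, D - f + 1 ≤ p.1 ∧ p.1 ≤ p.2 ∧ p.2 ≤ D) ∧
    List.Pairwise rel (build D x f) ∧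
    (∀ k, Cov (build D x f) k ↔ (D - f + 1 ≤ k ∧ pos D x k = 1)) := by
  intro f
  induction f with
  | zero =>
    intro _
    refine ⟨by simp [build], by simp [build], ?_⟩
    intro k
    simp only [build]
    constructor
    · rintro ⟨p, hp, _⟩; simp at hp
    · rintro ⟨h1, h2⟩
      exfalso
      unfold pos at h2
      split_ifs at h2 with h3
      · omega
      · exact absurd h2 (by decide)
  | succ f ihf =>
    intro hfD
    obtain ⟨hB, hPW, hC⟩ := ihf (by omega)
    have hj1 : 1 ≤ D - f := by omega
    have hjf : D - (f + 1) + 1 = D - f := by omega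
    by_cases hx : pos D x (D - f) = 1
    · have hxr : D - f ≤ D := by omega
      match hBv : build D x f with
      | (a, b) :: T =>
        rw [hBv] at hB hPW hC
        have hab := hB (a, b) (by simp)
        by_cases hmerge : D - f + 1 = a
        · have hbuild : build D x (f + 1) = (D - f, b) :: T := by
            simp only [build, hBv, if_pos hx, if_pos hmerge]
          rw [hbuild, hjf]
          refine ⟨?_, ?_, ?_⟩
          · intro p hp
            rcases List.mem_cons.1 hp with rfl | hp'
            · simp only; omega
            · have := hB p (by simp [hp'])
              omega
          · refine List.Pairwise.cons ?_ (List.pairwise_cons.1 hPW).2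
            intro q hq
            have := (List.pairwise_cons.1 hPW).1 q hq
            exact this
          · intro k
            constructor
            · rintro ⟨p, hp, h1, h2⟩
              rcases List.mem_cons.1 hp with rfl | hp'
              · simp only at h1 h2
                rcases Nat.eq_or_lt_of_le h1 with rfl | hlt
                · exact ⟨le_rfl, hx⟩
                · have := (hC k).1 ⟨(a, b), by simp, by omega, by omega⟩
                  exact ⟨by omega, this.2⟩
              · have := (hC k).1 ⟨p, by simp [hp'], h1, h2⟩
                exact ⟨by omega, this.2⟩
            · rintro ⟨h1, h2⟩
              rcases Nat.eq_or_lt_of_le h1 with rfl | hlt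
              · exact ⟨(D - f, b), by simp, le_rfl, by omega⟩
              · obtain ⟨p, hp, hc1, hc2⟩ := (hC k).2 ⟨by omega, h2⟩
                rcases List.mem_cons.1 hp with rfl | hp'
                · exact ⟨(D - f, b), by simp, by simp only; omega, by simp only at hc2 ⊢; omega⟩
                · exact ⟨p, by simp [hp'], hc1, hc2⟩
        · have ha2 : D - f + 2 ≤ a := by omega
          have hbuild : build D x (f + 1) = (D - f, D - f) :: (a, b) :: T := by
            simp only [build, hBv, if_pos hx, if_neg hmerge]
          rw [hbuild, hjf]
          refine ⟨?_, ?_, ?_⟩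
          · intro p hp
            rcases List.mem_cons.1 hp with rfl | hp'
            · simp only; omega
            · have := hB p hp'
              omega
          · refine List.Pairwise.cons ?_ hPW
            intro q hq
            rcases List.mem_cons.1 hq with rfl | hq'
            · show D - f + 2 ≤ a; omega
            · have h1 := List.rel_of_pairwise_cons hPW hq'
              have h2 := hB q (by simp [hq'])
              show D - f + 2 ≤ q.1
              omega
          · intro k
            constructor
            · rintro ⟨p, hp, h1, h2⟩
              rcases List.mem_cons.1 hp with rfl | hp'
              · simp only at h1 h2
                have : k = D - f := by omega
                subst this
                exact ⟨le_rfl, hx⟩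
              · have := (hC k).1 ⟨p, hp', h1, h2⟩
                exact ⟨by omega, this.2⟩
            · rintro ⟨h1, h2⟩
              rcases Nat.eq_or_lt_of_le h1 with rfl | hlt
              · exact ⟨(D - f, D - f), by simp, le_rfl, le_rfl⟩
              · obtain ⟨p, hp, hc1, hc2⟩ := (hC k).2 ⟨by omega, h2⟩
                exact ⟨p, by simp [hp], hc1, hc2⟩
      | [] =>
        rw [hBv] at hB hPW hC
        have hbuild : build D x (f + 1) = [(D - f, D - f)] := by
          simp only [build, hBv, if_pos hx]
        rw [hbuild, hjf]
        refine ⟨?_, by simp, ?_⟩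
        · intro p hp
          simp only [List.mem_singleton] at hp
          subst hp
          simp only
          omega
        · intro k
          constructor
          · rintro ⟨p, hp, h1, h2⟩
            simp only [List.mem_singleton] at hp
            subst hp
            simp only at h1 h2
            have : k = D - f := by omega
            subst this
            exact ⟨le_rfl, hx⟩
          · rintro ⟨h1, h2⟩
            rcases Nat.eq_or_lt_of_le h1 with rfl | hlt
            · exact ⟨(D - f, D - f), by simp, le_rfl, le_rfl⟩
            · exfalso
              have := (hC k).2 ⟨by omega, h2⟩
              obtain ⟨p, hp, _⟩ := this
              simp at hp
    · have hbuild : build D x (f + 1) = build D x f := by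
        simp only [build, if_neg hx]
      rw [hbuild, hjf]
      refine ⟨?_, hPW, ?_⟩
      · intro p hp
        have := hB p hp
        omega
      · intro k
        rw [hC k]
        constructor
        · rintro ⟨h1, h2⟩; exact ⟨by omega, h2⟩
        · rintro ⟨h1, h2⟩
          rcases Nat.eq_or_lt_of_le h1 with rfl | hlt
          · exact absurd h2 hx
          · exact ⟨by omega, h2⟩

lemma exists_decomp (D : ℕ) (x : Fin D → ZMod 2) :
    ∃ L, NormalDecomp D L ∧ vec D L = x := by
  obtain ⟨hB, hPW, hC⟩ := build_spec D x D le_rfl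
  refine ⟨build D x D, ?_, ?_⟩
  · rw [nd_iff]
    refine ⟨?_, hPW⟩
    intro p hp
    have := hB p hp
    omega
  · funext k
    rw [vec_apply D _ hPW k]
    have hk := k.isLt
    have hpos : pos D x (k.1 + 1) = x k := by
      unfold pos
      rw [dif_pos (by omega)]
      exact congrArg x (Fin.ext rfl)
    rcases z01 (x k) with h0 | h1
    · rw [h0, if_neg]
      intro hcv
      have h2 := ((hC (k.1 + 1)).1 hcv).2
      rw [hpos, h0] at h2
      exact absurd h2 (by decide)
    · rw [h1, if_pos]
      exact (hC (k.1 + 1)).2 ⟨by omega, by rw [hpos, h1]⟩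

end S12

namespace S12

lemma vec_mid (D : ℕ) (P Q : List (ℕ × ℕ)) (p : ℕ × ℕ) :
    vec D (P ++ p :: Q) = eI D p + vec D (P ++ Q) := by
  rw [vec_append, vec_cons, vec_append]
  ring

lemma uval_mid (P Q : List (ℕ × ℕ)) (p : ℕ × ℕ) :
    uval (P ++ p :: Q) = w p + uval (P ++ Q) := by
  rw [uval_append, uval_cons, uval_append]
  ring

lemma w_single0 (a : ℕ) : w (a, a) = 0 := by
  simp only [w]
  split_ifs <;> omega

lemma w_split (a b i : ℕ) (h1 : 1 ≤ a) (h2 : a < i) (h3 : i < b) :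
    w (a, i - 1) + w (i + 1, b) = w (a, b) := by
  simp only [w]
  have e : (i - 1) % 2 = (i + 1) % 2 := by omega
  split_ifs <;> omega

lemma z_of_sum (D : ℕ) (y z : Fin D → ZMod 2) (i : ℕ)
    (h : y + z = basisVec D i) : z = y + basisVec D i := by
  rw [← h]
  have : y + (y + z) = (y + y) + z := by ring
  rw [this, vadd_self, zero_add]

lemma adj_uval_one (D : ℕ) (y z : Fin D → ZMod 2) (N M : List (ℕ × ℕ))
    (hN : NormalDecomp D N) (hyN : vec D N = y) (hM : NormalDecomp D M)
    (hzM : vec D M = z) (i : ℕ) (hi1 : 1 ≤ i) (hi2 : i ≤ D)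
    (hsum : y + z = basisVec D i) (hbf : bform D y (basisVec D i) = 0)
    (hyi : pos D y i = 1) : uval N = uval M := by
  subst hyN
  subst hzM
  have hz := z_of_sum D _ _ i hsum
  rw [bform_basis D _ i hi1 hi2] at hbf
  -- i is covered in N
  have hcov : Cov N i := by
    by_contra hnc
    rw [pos_vec_zero D N hN i hnc] at hyi
    exact absurd hyi (by decide)
  obtain ⟨p, hp, hc1, hc2⟩ := hcov
  obtain ⟨P, Q, rfl⟩ := List.append_of_mem hp
  obtain ⟨a, b⟩ := p
  simp only at hc1 hc2
  -- neighbour coverage facts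
  have hN' := hN
  rw [← cons_form] at hN'
  obtain ⟨b1, b2, b3, p1, p2, p3, c1, c2, c3⟩ := nd_parts D P _ Q hN'
  have hab := b2 (a, b) (by simp)
  simp only at hab
  have hleft : ¬ Cov (P ++ (a, b) :: Q) (a - 1) := by
    rintro ⟨⟨u, v⟩, hq, hq1, hq2⟩
    simp only at hq1 hq2
    rcases List.mem_append.1 hq with hq' | hq''
    · have : v + 2 ≤ a := c1 (u, v) hq' (a, b) (by simp)
      omega
    · rcases List.mem_cons.1 hq'' with heq | hq'''
      · simp only [Prod.mk.injEq] at heq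
        omega
      · have : b + 2 ≤ u := c3 (a, b) (by simp) (u, v) hq'''
        omega
  have hright : ¬ Cov (P ++ (a, b) :: Q) (b + 1) := by
    rintro ⟨⟨u, v⟩, hq, hq1, hq2⟩
    simp only at hq1 hq2
    rcases List.mem_append.1 hq with hq' | hq''
    · have : v + 2 ≤ a := c1 (u, v) hq' (a, b) (by simp)
      omega
    · rcases List.mem_cons.1 hq'' with heq | hq'''
      · simp only [Prod.mk.injEq] at heq
        omega
      · have : b + 2 ≤ u := c3 (a, b) (by simp) (u, v) hq'''
        omega
  rcases Nat.eq_or_lt_of_le hc1 with hai | hai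
  · -- a = i
    subst hai
    rcases Nat.eq_or_lt_of_le hc2 with hbi | hbi
    · -- a = i = b : delete the singleton
      subst hbi
      have hv : vec D (P ++ Q) = vec D (P ++ (a, a) :: Q) + basisVec D a := by
        rw [vec_mid D P Q (a, a), eI_singleton D a]
        have h2 : basisVec D a + vec D (P ++ Q) + basisVec D a =
            (basisVec D a + basisVec D a) + vec D (P ++ Q) := by ring
        rw [h2, vadd_self, zero_add]
      have hndPQ := nd_del' D P Q (a, a) hN
      have hMM : M = P ++ Q := unique_decomp D M _ hM hndPQ (by rw [hz, hv])
      rw [hMM, uval_mid, w_single0, zero_add]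
    · -- a = i < b : contradiction using left gap
      exfalso
      have hl : pos D (vec D (P ++ (a, b) :: Q)) (a - 1) = 0 :=
        pos_vec_zero D _ hN _ hleft
      have hr : pos D (vec D (P ++ (a, b) :: Q)) (a + 1) = 1 :=
        pos_vec_one D _ hN _ ⟨(a, b), by simp, by simp only; omega, by simp only; omega⟩
      rw [hl, hr] at hbf
      exact absurd hbf (by decide)
  · rcases Nat.eq_or_lt_of_le hc2 with hbi | hbi
    · -- a < i = b : contradiction using right gap
      exfalso
      subst hbi
      have hr : pos D (vec D (P ++ (a, i) :: Q)) (i + 1) = 0 :=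
        pos_vec_zero D _ hN _ hright
      have hl : pos D (vec D (P ++ (a, i) :: Q)) (i - 1) = 1 :=
        pos_vec_one D _ hN _ ⟨(a, i), by simp, by simp only; omega, by simp only; omega⟩
      rw [hl, hr] at hbf
      exact absurd hbf (by decide)
    · -- a < i < b : split
      have hndS := nd_split' D P Q a b i hN hai hbi
      have hv : vec D (P ++ (a, i - 1) :: (i + 1, b) :: Q)
          = vec D (P ++ (a, b) :: Q) + basisVec D i := by
        rw [vec_mid D P _ (a, i - 1), vec_mid D P _ (i + 1, b), vec_mid D P Q (a, b),
          eI_split D a b i hab.1 hai hbi]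
        have hs := vadd_self D (basisVec D i)
        have : eI D (a, i - 1) + (eI D (i + 1, b) + vec D (P ++ Q)) =
            eI D (a, i - 1) + eI D (i + 1, b) + (basisVec D i + basisVec D i) + vec D (P ++ Q) := by
          rw [hs]; ring
        rw [this]; ring
      rw [← hz] at hv
      have hMM : M = P ++ (a, i - 1) :: (i + 1, b) :: Q :=
        unique_decomp D M _ hM hndS hv.symm
      rw [hMM, uval_mid, uval_mid, uval_mid, ← add_assoc, w_split a b i hab.1 hai hbi]

end S12

namespace S12

lemma adj_uval (D : ℕ) (y z : Fin D → ZMod 2) (N M : List (ℕ × ℕ))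
    (hN : NormalDecomp D N) (hyN : vec D N = y) (hM : NormalDecomp D M)
    (hzM : vec D M = z) (hadj : Adj D y z) : uval N = uval M := by
  obtain ⟨i, hi1, hi2, hsum, hbfy, hbfz⟩ := hadj
  rcases z01 (pos D y i) with h0 | h1
  · have hz := z_of_sum D y z i hsum
    have hzi : pos D z i = 1 := by
      rw [hz, pos_add, pos_basis D i hi1 hi2, h0, zero_add]
    exact (adj_uval_one D z y M N hM hzM hN hyN i hi1 hi2 (by rwa [add_comm] at hsum)
      hbfz hzi).symm
  · exact adj_uval_one D y z N M hN hyN hM hzM i hi1 hi2 hsum hbfy h1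

lemma forward (D : ℕ) {x y : Fin D → ZMod 2} (h : Relation.ReflTransGen (Adj D) x y) :
    ∀ L M, NormalDecomp D L → vec D L = x → NormalDecomp D M → vec D M = y →
    uval L = uval M := by
  induction h with
  | refl =>
    intro L M h1 h2 h3 h4
    rw [unique_decomp D L M h1 h3 (h2.trans h4.symm)]
  | tail hxy hadj ih =>
    intro L M h1 h2 h3 h4
    rename_i b c
    obtain ⟨N, hN, hvN⟩ := exists_decomp D b
    exact (ih L N h1 h2 hN hvN).trans (adj_uval D b c N M hN hvN h3 h4 hadj)

end S12


/-- For `D` even, `x, x'` lie in the same connected component of the graph on `V`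
if and only if `u(x) = u(x')`; so the components are exactly the fibers of `u`. -/
theorem stmt_12 (D : ℕ) (hD : Even D) (x x' : Fin D → ZMod 2)
    (L L' : List (ℕ × ℕ)) (hL : NormalDecomp D L) (hLsum : (L.map (eI D)).sum = x)
    (hL' : NormalDecomp D L') (hL'sum : (L'.map (eI D)).sum = x') :
    Relation.ReflTransGen (Adj D) x x' ↔ uval L = uval L' := by
  have hxv : S12.vec D L = x := hLsum
  have hx'v : S12.vec D L' = x' := hL'sum
  constructor
  · intro h
    exact S12.forward D h L L' hL hxv hL' hx'v
  · intro h
    have h1 := S12.reach_canon D L hL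
    have h2 := S12.reach_canon D L' hL'
    rw [hxv] at h1
    rw [hx'v] at h2
    rw [h] at h1
    exact h1.trans (S12.rg_symm D h2)
end

section
/- Let D be even and s ∈ [0, D/2]. Any two vectors x, x' ∈ V(s) lie in the same connected component of the graph on V (where x ∼ y iff x + y = e_i, (x,e_i) = 0 for some i ∈ [1,D]). -/
/-- `p` and `q` are non-touching intervals. -/
def NonTouch (p q : ℕ × ℕ) : Prop := q.2 + 2 ≤ p.1 ∨ p.2 + 2 ≤ q.1

/-- A list of intervals presenting an element of `V(s)`. -/
def VsList (D s : ℕ) (L : List (ℕ × ℕ)) : Prop :=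
  L.length = (if s % 2 = 0 then s / 2 else (s + 1) / 2) ∧
    (∀ p ∈ L, 1 ≤ p.1 ∧ p.1 ≤ p.2 ∧ p.2 ≤ D) ∧
    L.Pairwise NonTouch ∧
    (∀ p ∈ L, p.1 % 2 = s % 2 ∧ p.2 % 2 = (s + 1) % 2)

def gv (D : ℕ) (x : Fin D → ZMod 2) (j : ℕ) : ZMod 2 :=
  if h : 1 ≤ j ∧ j ≤ D then x ⟨j - 1, by omega⟩ else 0
lemma gv_add (D : ℕ) (x y : Fin D → ZMod 2) (j : ℕ) :
    gv D (x + y) j = gv D x j + gv D y j := by unfold gv; split <;> simp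
lemma gv_basisVec (D i j : ℕ) :
    gv D (basisVec D i) j = if j = i ∧ 1 ≤ j ∧ j ≤ D then 1 else 0 := by
  unfold gv basisVec
  split_ifs with h1 h2 h2 <;> simp -failIfUnchanged only [Fin.val_mk] at * <;> first | rfl | omega
lemma sum_if_coord (D j : ℕ) (x : Fin D → ZMod 2) :
    (∑ a : Fin D, if a.1 + 1 = j then x a else 0) = gv D x j := by
  by_cases h : 1 ≤ j ∧ j ≤ D
  · rw [Finset.sum_eq_single (⟨j - 1, by omega⟩ : Fin D)]
    · simp only [gv, dif_pos h, Fin.val_mk]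
      rw [if_pos (by omega)]
    · intro b _ hb
      rw [if_neg]
      intro hc
      exact hb (Fin.ext (by simp only [Fin.val_mk]; omega))
    · intro hb; exact absurd (Finset.mem_univ _) hb
  · rw [gv, dif_neg h, Finset.sum_eq_zero]
    intro a _
    rw [if_neg]
    have := a.2
    omega
lemma bform_basisVec (D i : ℕ) (h1 : 1 ≤ i) (h2 : i ≤ D) (x : Fin D → ZMod 2) :
    bform D x (basisVec D i) = gv D x (i - 1) + gv D x (i + 1) := by
  unfold bform
  have hrow : ∀ a : Fin D,
      (∑ b : Fin D, if a.1 = b.1 + 1 ∨ b.1 = a.1 + 1 then x a * basisVec D i b else 0)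
      = (if a.1 + 1 = i - 1 then x a else 0) + (if a.1 + 1 = i + 1 then x a else 0) := by
    intro a
    rw [Finset.sum_eq_single (⟨i - 1, by omega⟩ : Fin D)]
    · simp only [basisVec, Fin.val_mk]
      split_ifs
      any_goals (exfalso; omega)
      all_goals simp
    · intro b _ hb
      have hbv : basisVec D i b = 0 := by
        unfold basisVec
        rw [if_neg]; intro hc; exact hb (Fin.ext (by simp only [Fin.val_mk]; omega))
      rw [hbv, mul_zero]
      split <;> rfl
    · intro hb; exact absurd (Finset.mem_univ _) hb
  rw [Finset.sum_congr rfl (fun a _ => hrow a), Finset.sum_add_distrib,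
    sum_if_coord, sum_if_coord]



lemma flip_step (D i : ℕ) (h1 : 1 ≤ i) (h2 : i ≤ D) (x : Fin D → ZMod 2)
    (h : gv D x (i - 1) = gv D x (i + 1)) :
    Relation.ReflTransGen (Adj D) x (x + basisVec D i) := by
  have hb : bform D x (basisVec D i) = 0 := by
    rw [bform_basisVec D i h1 h2, h, CharTwo.add_self_eq_zero]
  refine Relation.ReflTransGen.single ⟨i, h1, h2, ?_, hb, ?_⟩
  · funext k
    simp only [Pi.add_apply]
    rw [← add_assoc, CharTwo.add_self_eq_zero, zero_add]
  · rw [bform_basisVec D i h1 h2, gv_add, gv_add, gv_basisVec, gv_basisVec,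
      if_neg (by omega), if_neg (by omega), add_zero, add_zero, h,
      CharTwo.add_self_eq_zero]

lemma rtg_symm {D : ℕ} {x y : Fin D → ZMod 2}
    (h : Relation.ReflTransGen (Adj D) x y) : Relation.ReflTransGen (Adj D) y x := by
  have hs : Symmetric (Adj D) := by
    rintro u v ⟨i, hi1, hi2, hsum, hb1, hb2⟩
    exact ⟨i, hi1, hi2, by rwa [add_comm], hb2, hb1⟩
  haveI : Std.Symm (Adj D) := ⟨fun _ _ h => hs h⟩
  exact (Relation.ReflTransGen.symmetric (r := Adj D)).symm _ _ h

lemma rtg_cast {D : ℕ} {x y x' y' : Fin D → ZMod 2}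
    (h : Relation.ReflTransGen (Adj D) x y) (hx : x = x') (hy : y = y') :
    Relation.ReflTransGen (Adj D) x' y' := hx ▸ hy ▸ h

/-- grow on the right: `1`s end at `b`, grow to end at `b+2`. -/
lemma growR (D b : ℕ) (hb : 1 ≤ b) (hD : b + 2 ≤ D) (x : Fin D → ZMod 2)
    (h0 : gv D x b = 1) (h1 : gv D x (b+1) = 0) (h2 : gv D x (b+2) = 0)
    (h3 : gv D x (b+3) = 0) :
    Relation.ReflTransGen (Adj D) x (x + basisVec D (b+1) + basisVec D (b+2)) := by
  have s1 : Relation.ReflTransGen (Adj D) x (x + basisVec D (b+2)) := by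
    apply flip_step D (b+2) (by omega) (by omega)
    have e1 : b + 2 - 1 = b + 1 := by omega
    rw [e1, h1, h3]
  have s2 : Relation.ReflTransGen (Adj D) (x + basisVec D (b+2))
      (x + basisVec D (b+2) + basisVec D (b+1)) := by
    apply flip_step D (b+1) (by omega) (by omega)
    have e1 : b + 1 - 1 = b := by omega
    have e2 : b + 1 + 1 = b + 2 := by omega
    rw [e1, e2, gv_add, gv_add, h0, gv_basisVec, gv_basisVec,
      if_neg (by omega), if_pos (by omega), h2]
    decide
  exact rtg_cast (s1.trans s2) rfl (by abel)

/-- grow on the left: `1`s start at `c+3`, grow to start at `c+1`. -/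
lemma growL (D c : ℕ) (hD : c + 2 ≤ D) (x : Fin D → ZMod 2)
    (h0 : gv D x c = 0) (h1 : gv D x (c+1) = 0) (h2 : gv D x (c+2) = 0)
    (h3 : gv D x (c+3) = 1) :
    Relation.ReflTransGen (Adj D) x (x + basisVec D (c+1) + basisVec D (c+2)) := by
  have s1 : Relation.ReflTransGen (Adj D) x (x + basisVec D (c+1)) := by
    apply flip_step D (c+1) (by omega) (by omega)
    have e1 : c + 1 - 1 = c := by omega
    have e2 : c + 1 + 1 = c + 2 := by omega
    rw [e1, e2, h0, h2]
  have s2 : Relation.ReflTransGen (Adj D) (x + basisVec D (c+1))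
      (x + basisVec D (c+1) + basisVec D (c+2)) := by
    apply flip_step D (c+2) (by omega) (by omega)
    have e1 : c + 2 - 1 = c + 1 := by omega
    rw [e1, gv_add, gv_add, h1, h3, gv_basisVec, gv_basisVec,
      if_pos (by omega), if_neg (by omega)]
    decide
  exact s1.trans s2



lemma gv_eI (D : ℕ) (p : ℕ × ℕ) (j : ℕ) (hp : 1 ≤ p.1) (hp2 : p.2 ≤ D) :
    gv D (eI D p) j = if p.1 ≤ j ∧ j ≤ p.2 then 1 else 0 := by
  unfold gv eI
  split_ifs with h1 h2 h2 <;> simp -failIfUnchanged only [Fin.val_mk] at * <;> first | rfl | omega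

lemma gv_eI_zero (D : ℕ) (p : ℕ × ℕ) (j : ℕ) (h : j < p.1 ∨ p.2 < j) :
    gv D (eI D p) j = 0 := by
  unfold gv eI
  split_ifs with h1 h2 <;> simp only [Fin.val_mk] at * <;> first | rfl | omega

lemma gv_listsum_zero (D : ℕ) (L : List (ℕ × ℕ)) (j : ℕ)
    (h : ∀ p ∈ L, j < p.1 ∨ p.2 < j) :
    gv D ((L.map (eI D)).sum) j = 0 := by
  induction L with
  | nil => simp only [List.map_nil, List.sum_nil, gv]; split <;> rfl
  | cons p L ih =>
    simp only [List.map_cons, List.sum_cons, gv_add]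
    rw [gv_eI_zero D p j (h p (by simp)), ih (fun q hq => h q (by simp [hq])), add_zero]

lemma eI_right (D a b : ℕ) (h : a ≤ b + 1) :
    eI D (a, b + 2) = eI D (a, b) + basisVec D (b+1) + basisVec D (b+2) := by
  funext k
  simp only [eI, basisVec, Pi.add_apply]
  split_ifs <;> first | decide | (exfalso; omega)

lemma eI_left (D a b : ℕ) (h : a + 1 ≤ b) :
    eI D (a, b) = eI D (a+2, b) + basisVec D a + basisVec D (a+1) := by
  funext k
  simp only [eI, basisVec, Pi.add_apply]
  split_ifs <;> first | decide | (exfalso; omega)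

lemma grow_all (D a : ℕ) (y : Fin D → ZMod 2) :
    ∀ n : ℕ, a + 1 + 2*n ≤ D → 1 ≤ a →
    (∀ j, a ≤ j → j ≤ a + 2 + 2*n → gv D y j = 0) →
    Relation.ReflTransGen (Adj D) (y + eI D (a, a+1)) (y + eI D (a, a+1+2*n)) := by
  intro n
  induction n with
  | zero => intro _ _ _; simpa using Relation.ReflTransGen.refl
  | succ n ih =>
    intro hD ha hy
    have step : Relation.ReflTransGen (Adj D) (y + eI D (a, a+1+2*n))
        (y + eI D (a, a+1+2*(n+1))) := by
      have hg := growR D (a+1+2*n) (by omega) (by omega) (y + eI D (a, a+1+2*n))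
        (by rw [gv_add, hy _ (by omega) (by omega), gv_eI D _ _ (by omega) (by omega),
              if_pos (by omega)]; decide)
        (by rw [gv_add, hy _ (by omega) (by omega), gv_eI_zero D _ _ (by omega)]; decide)
        (by rw [gv_add, hy _ (by omega) (by omega), gv_eI_zero D _ _ (by omega)]; decide)
        (by rw [gv_add, hy _ (by omega) (by omega), gv_eI_zero D _ _ (by omega)]; decide)
      refine rtg_cast hg rfl ?_
      have hpair : (a, a+1+2*(n+1)) = (a, (a+1+2*n) + 2) := by norm_num; omega
      rw [hpair, eI_right D a (a+1+2*n) (by omega)]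
      abel
    exact (ih (by omega) ha (fun j h1 h2 => hy j h1 (by omega))).trans step

lemma shift_all (D m : ℕ) (y : Fin D → ZMod 2) :
    ∀ n : ℕ, 1 ≤ m → m + 1 + 2*n ≤ D →
    (∀ j, m - 1 ≤ j → j ≤ m + 2 + 2*n → gv D y j = 0) →
    Relation.ReflTransGen (Adj D) (y + eI D (m + 2*n, m + 2*n + 1)) (y + eI D (m, m+1)) := by
  intro n
  induction n with
  | zero => intro _ _ _; simpa using Relation.ReflTransGen.refl
  | succ n ih =>
    intro hm hD hy
    obtain ⟨μ, rfl⟩ : ∃ μ, m = μ + 1 := ⟨m - 1, by omega⟩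
    -- current interval is (μ + 2*n + 3, μ + 2*n + 4)
    have step1 : Relation.ReflTransGen (Adj D)
        (y + eI D (μ+1 + 2*(n+1), μ+1 + 2*(n+1) + 1))
        (y + eI D (μ + 2*n + 1, μ + 2*n + 4)) := by
      have hpair : (μ+1 + 2*(n+1), μ+1 + 2*(n+1) + 1) = (μ + 2*n + 3, μ + 2*n + 4) := by
        norm_num; omega
      rw [hpair]
      have hg := growL D (μ + 2*n) (by omega) (y + eI D (μ + 2*n + 3, μ + 2*n + 4))
        (by rw [gv_add, hy _ (by omega) (by omega), gv_eI_zero D _ _ (by omega)]; decide)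
        (by rw [gv_add, hy _ (by omega) (by omega), gv_eI_zero D _ _ (by omega)]; decide)
        (by rw [gv_add, hy _ (by omega) (by omega), gv_eI_zero D _ _ (by omega)]; decide)
        (by rw [gv_add, hy _ (by omega) (by omega), gv_eI D _ _ (by omega) (by omega),
              if_pos (by omega)]; decide)
      refine rtg_cast hg rfl ?_
      rw [eI_left D (μ + 2*n + 1) (μ + 2*n + 4) (by omega)]
      have e1 : μ + 2*n + 1 + 2 = μ + 2*n + 3 := by omega
      have e2 : μ + 2*n + 1 + 1 = μ + 2*n + 2 := by omega
      rw [e1, e2]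
      abel
    have step2 : Relation.ReflTransGen (Adj D)
        (y + eI D (μ + 2*n + 1, μ + 2*n + 4))
        (y + eI D (μ+1 + 2*n, μ+1 + 2*n + 1)) := by
      have hpair : (μ+1 + 2*n, μ+1 + 2*n + 1) = (μ + 2*n + 1, μ + 2*n + 2) := by
        norm_num; omega
      rw [hpair]
      apply rtg_symm
      have hg := growR D (μ + 2*n + 2) (by omega) (by omega)
        (y + eI D (μ + 2*n + 1, μ + 2*n + 2))
        (by rw [gv_add, hy _ (by omega) (by omega), gv_eI D _ _ (by omega) (by omega),
              if_pos (by omega)]; decide)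
        (by rw [gv_add, hy _ (by omega) (by omega), gv_eI_zero D _ _ (by omega)]; decide)
        (by rw [gv_add, hy _ (by omega) (by omega), gv_eI_zero D _ _ (by omega)]; decide)
        (by rw [gv_add, hy _ (by omega) (by omega), gv_eI_zero D _ _ (by omega)]; decide)
      refine rtg_cast hg rfl ?_
      have hpair2 : (μ + 2*n + 1, μ + 2*n + 4) = (μ + 2*n + 1, (μ + 2*n + 2) + 2) := by
        norm_num
      rw [hpair2, eI_right D (μ + 2*n + 1) (μ + 2*n + 2) (by omega)]
      have e1 : μ + 2*n + 2 + 1 = μ + 2*n + 3 := by omega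
      have e2 : μ + 2*n + 2 + 2 = μ + 2*n + 4 := by omega
      rw [e1, e2]
      abel
    exact (step1.trans step2).trans
      (ih hm (by omega) (fun j h1 h2 => hy j h1 (by omega)))

def canon : ℕ → ℕ → List (ℕ × ℕ)
  | _, 0 => []
  | m, (t+1) => (m, m+1) :: canon (m+4) t

lemma main_lemma (D : ℕ) : ∀ (L : List (ℕ × ℕ)) (m : ℕ) (y : Fin D → ZMod 2),
    1 ≤ m →
    (∀ j, m - 1 ≤ j → gv D y j = 0) →
    (∀ p ∈ L, m ≤ p.1 ∧ p.1 < p.2 ∧ p.2 ≤ D ∧ p.1 % 2 = m % 2 ∧ p.2 % 2 = (m+1) % 2) →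
    List.Pairwise (fun p q => p.2 + 2 ≤ q.1) L →
    Relation.ReflTransGen (Adj D) (y + (L.map (eI D)).sum)
      (y + ((canon m L.length).map (eI D)).sum) := by
  intro L
  induction L with
  | nil => intro m y _ _ _ _; exact Relation.ReflTransGen.refl
  | cons p L' ih =>
    intro m y hm hy hmem hpw
    obtain ⟨hgap, hpw'⟩ := List.pairwise_cons.mp hpw
    obtain ⟨hma, hab, hbD, hpar1, hpar2⟩ := hmem p List.mem_cons_self
    obtain ⟨n₁, hn₁⟩ : ∃ n, p.2 = p.1 + 1 + 2*n := ⟨(p.2 - p.1 - 1)/2, by omega⟩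
    obtain ⟨n₂, hn₂⟩ : ∃ n, p.1 = m + 2*n := ⟨(p.1 - m)/2, by omega⟩
    set S : Fin D → ZMod 2 := (L'.map (eI D)).sum with hS
    have hYz : ∀ j, m - 1 ≤ j → j ≤ p.2 + 1 → gv D (y + S) j = 0 := by
      intro j h1 h2
      rw [gv_add, hy j h1, gv_listsum_zero D L' j
        (fun q hq => Or.inl (by have := hgap q hq; omega)), add_zero]
    have stepA : Relation.ReflTransGen (Adj D)
        (y + ((p :: L').map (eI D)).sum) ((y + S) + eI D (p.1, p.1 + 1)) := by
      apply rtg_symm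
      have hg := grow_all D p.1 (y + S) n₁ (by omega) (by omega)
        (fun j h1 h2 => hYz j (by omega) (by omega))
      refine rtg_cast hg rfl ?_
      have hpair : p = (p.1, p.1 + 1 + 2*n₁) := Prod.ext rfl hn₁
      simp only [List.map_cons, List.sum_cons]
      rw [← hpair]
      abel
    have stepB : Relation.ReflTransGen (Adj D)
        ((y + S) + eI D (p.1, p.1 + 1)) ((y + S) + eI D (m, m+1)) := by
      have hg := shift_all D m (y + S) n₂ hm (by omega)
        (fun j h1 h2 => hYz j h1 (by omega))
      refine rtg_cast hg ?_ rfl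
      rw [← hn₂]
    have stepC : Relation.ReflTransGen (Adj D)
        ((y + S) + eI D (m, m+1))
        (y + ((canon m (p :: L').length).map (eI D)).sum) := by
      have hy2 : ∀ j, (m + 4) - 1 ≤ j → gv D (y + eI D (m, m+1)) j = 0 := by
        intro j hj
        rw [gv_add, hy j (by omega), gv_eI_zero D _ _ (by right; simpa using by omega),
          add_zero]
      have hmem2 : ∀ q ∈ L', m + 4 ≤ q.1 ∧ q.1 < q.2 ∧ q.2 ≤ D ∧
          q.1 % 2 = (m+4) % 2 ∧ q.2 % 2 = (m+4+1) % 2 := by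
        intro q hq
        obtain ⟨h1, h2, h3, h4, h5⟩ := hmem q (List.mem_cons_of_mem p hq)
        have := hgap q hq
        refine ⟨by omega, h2, h3, by omega, by omega⟩
      have hg := ih (m+4) (y + eI D (m, m+1)) (by omega) hy2 hmem2 hpw'
      refine rtg_cast hg (by abel) ?_
      simp only [List.length_cons, canon, List.map_cons, List.sum_cons]
      abel
    exact (stepA.trans stepB).trans stepC





lemma gv_zero (D j : ℕ) : gv D (0 : Fin D → ZMod 2) j = 0 := by
  unfold gv; split <;> simp

lemma vslist_to_canon (D s : ℕ) (L : List (ℕ × ℕ)) (hL : VsList D s L) :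
    Relation.ReflTransGen (Adj D) ((L.map (eI D)).sum)
      (((canon (2 - s % 2) L.length).map (eI D)).sum) := by
  obtain ⟨hlen, hbound, hpw, hpar⟩ := hL
  haveI : Std.Total (fun p q : ℕ × ℕ => p.1 ≤ q.1) := ⟨fun a b => Nat.le_total a.1 b.1⟩
  haveI : IsTrans (ℕ × ℕ) (fun p q : ℕ × ℕ => p.1 ≤ q.1) :=
    ⟨fun a b c hab hbc => Nat.le_trans hab hbc⟩
  set L₂ := L.insertionSort (fun p q : ℕ × ℕ => p.1 ≤ q.1) with hL₂
  have hperm : L₂.Perm L := List.perm_insertionSort _ L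
  have hsorted : List.Pairwise (fun p q : ℕ × ℕ => p.1 ≤ q.1) L₂ :=
    List.pairwise_insertionSort _ L
  have hsum : (L₂.map (eI D)).sum = (L.map (eI D)).sum := (hperm.map (eI D)).sum_eq
  have hlen2 : L₂.length = L.length := hperm.length_eq
  have hnt2 : L₂.Pairwise NonTouch :=
    (List.Perm.pairwise_iff (fun h => h.symm) hperm).mpr hpw
  have hpair2 : L₂.Pairwise (fun p q => p.2 + 2 ≤ q.1) := by
    apply List.Pairwise.imp_of_mem ?_ (hnt2.and hsorted)
    intro a b ha hb hab
    have hbb := hbound b (hperm.subset hb)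
    rcases hab.1 with h | h
    · exfalso; have := hab.2; omega
    · exact h
  have hmem2 : ∀ p ∈ L₂, 2 - s % 2 ≤ p.1 ∧ p.1 < p.2 ∧ p.2 ≤ D ∧
      p.1 % 2 = (2 - s % 2) % 2 ∧ p.2 % 2 = (2 - s % 2 + 1) % 2 := by
    intro p hp
    have h1 := hbound p (hperm.subset hp)
    have h2 := hpar p (hperm.subset hp)
    omega
  have hg := main_lemma D L₂ (2 - s % 2) 0 (by omega)
    (fun j _ => gv_zero D j) hmem2 hpair2
  rw [zero_add, zero_add, hsum, hlen2] at hg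
  exact hg

/-- For `D` even and `s ≤ D/2`, any two vectors of `V(s)` lie in the same connected
component of the graph on `V`. -/
theorem stmt_14 (D s : ℕ) (hD : Even D) (hs : s ≤ D / 2)
    (L L' : List (ℕ × ℕ)) (hL : VsList D s L) (hL' : VsList D s L') :
    Relation.ReflTransGen (Adj D) ((L.map (eI D)).sum) ((L'.map (eI D)).sum) := by
  have h1 := vslist_to_canon D s L hL
  have h2 := vslist_to_canon D s L' hL'
  have hlen : L'.length = L.length := by rw [hL.1, hL'.1]
  rw [hlen] at h2
  exact h1.trans (rtg_symm h2)
end
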